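/- arXiv:2202.05138 — 3 statements merged into one kernel-verified Lean document; each statement's English description precedes it below -/
import Mathlib

section
/- Assume Λ = Λ₁ ⊔ Λ₂ is a disjoint union such that ⟨H_α, H_β⟩ = 0 for all α ∈ Λ₁ and β ∈ Λ₂, and such that every root in Σ lies in span Λ₁ or in span Λ₂. Then 𝔞_{Λ₁} = 𝔞^{Λ₂} and 𝔫_{Λ₁} = 𝔫^{Λ₂}. Consequently, for every subspace 𝔥 of 𝔤 one has 𝔥 + 𝔞_{Λ₁} + 𝔫_{Λ₁} = 𝔥 + 𝔞^{Λ₂} + 𝔫^{Λ₂}. (This is the Lie-algebraic content of Lemma 5.1 of the paper: the canonical extension of an action on the factor B_{Λ₁} of a product has the same orbits as the corresponding product action.) -/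
/-- Lie-algebraic content of Lemma 5.1. In the restricted root space
setting of a semisimple Lie algebra `𝔤` of noncompact type, if `Λ = Λ₁ ⊔ Λ₂` is a disjoint
union with `⟨H_α, H_β⟩ = 0` for all `α ∈ Λ₁`, `β ∈ Λ₂`, and every restricted root lies in
`span Λ₁` or in `span Λ₂`, then `𝔞_{Λ₁} = 𝔞^{Λ₂}` and `𝔫_{Λ₁} = 𝔫^{Λ₂}`; consequently
`𝔥 + 𝔞_{Λ₁} + 𝔫_{Λ₁} = 𝔥 + 𝔞^{Λ₂} + 𝔫^{Λ₂}` for every subspace `𝔥` of `𝔤`. -/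
theorem product_canonical_extension_lemma
    {g : Type} [LieRing g] [LieAlgebra ℝ g] [FiniteDimensional ℝ g]
    [LieAlgebra.IsSemisimple ℝ g]
    -- Cartan involution and the associated inner product
    (θ : g ≃ₗ⁅ℝ⁆ g) (hθinv : ∀ X, θ (θ X) = X)
    (hθpos : ∀ X : g, X ≠ 0 → 0 < -(killingForm ℝ g X (θ X)))
    (ip : g → g → ℝ) (hip : ∀ X Y : g, ip X Y = -(killingForm ℝ g X (θ Y)))
    -- maximal abelian subspace 𝔞 of 𝔭
    (a : Submodule ℝ g)
    (ha_p : ∀ H ∈ a, θ H = -H)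
    (ha_ab : ∀ H ∈ a, ∀ H' ∈ a, ⁅H, H'⁆ = (0 : g))
    (ha_max : ∀ X : g, θ X = -X → (∀ H ∈ a, ⁅H, X⁆ = 0) → X ∈ a)
    -- restricted root spaces and restricted roots
    (gsp : Module.Dual ℝ a → Submodule ℝ g)
    (hgsp : ∀ (lam : Module.Dual ℝ a) (X : g),
      X ∈ gsp lam ↔ ∀ H : a, ⁅(H : g), X⁆ = lam H • X)
    (Sigma : Set (Module.Dual ℝ a))
    (hSigma : Sigma = {lam | lam ≠ 0 ∧ gsp lam ≠ ⊥})
    (hdecomp : (⨆ lam ∈ insert (0 : Module.Dual ℝ a) Sigma, gsp lam) = ⊤)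
    -- positive and simple roots
    (Splus : Set (Module.Dual ℝ a))
    (hSplus_sub : Splus ⊆ Sigma)
    (hSigma_split : Sigma = Splus ∪ (Neg.neg '' Splus))
    (hSplus_disj : ∀ lam ∈ Splus, -lam ∉ Splus)
    (Λ : Finset (Module.Dual ℝ a))
    (hΛ_sub : (Λ : Set (Module.Dual ℝ a)) ⊆ Splus)
    (hΛ_indep : LinearIndependent ℝ
      (fun x : {x // x ∈ Λ} => (x : Module.Dual ℝ a)))
    (hΛ_span : Submodule.span ℝ (Λ : Set (Module.Dual ℝ a)) = ⊤)
    (c : Module.Dual ℝ a → Module.Dual ℝ a → ℤ)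
    (hc : ∀ lam ∈ Sigma, lam = ∑ α ∈ Λ, (c lam α : ℝ) • α)
    (hc_pos : ∀ lam ∈ Splus, ∀ α ∈ Λ, 0 ≤ c lam α)
    (hc_neg : ∀ lam ∈ Sigma, lam ∉ Splus → ∀ α ∈ Λ, c lam α ≤ 0)
    -- root vectors H_λ ∈ 𝔞
    (Hroot : Module.Dual ℝ a → a)
    (hHroot : ∀ (lam : Module.Dual ℝ a) (H : a), lam H = ip (Hroot lam) H)
    -- the subspaces 𝔞_Φ, 𝔞^Φ, 𝔫_Φ, 𝔫^Φ associated with a subset Φ ⊆ Λ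
    (aPhi : Finset (Module.Dual ℝ a) → Submodule ℝ g)
    (haPhi : ∀ (Φ : Finset (Module.Dual ℝ a)) (X : g),
      X ∈ aPhi Φ ↔ ∃ hX : X ∈ a, ∀ α ∈ Φ, α ⟨X, hX⟩ = 0)
    (aUp : Finset (Module.Dual ℝ a) → Submodule ℝ g)
    (haUp : ∀ (Φ : Finset (Module.Dual ℝ a)) (X : g),
      X ∈ aUp Φ ↔ X ∈ a ∧ ∀ Y ∈ aPhi Φ, ip X Y = 0)
    (nPhi : Finset (Module.Dual ℝ a) → Submodule ℝ g)
    (hnPhi : ∀ Φ : Finset (Module.Dual ℝ a),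
      nPhi Φ = ⨆ lam ∈ {μ | μ ∈ Splus ∧
        μ ∉ Submodule.span ℝ (Φ : Set (Module.Dual ℝ a))}, gsp lam)
    (nUp : Finset (Module.Dual ℝ a) → Submodule ℝ g)
    (hnUp : ∀ Φ : Finset (Module.Dual ℝ a),
      nUp Φ = ⨆ lam ∈ {μ | μ ∈ Splus ∧
        μ ∈ Submodule.span ℝ (Φ : Set (Module.Dual ℝ a))}, gsp lam)
    -- the hypotheses of the lemma: Λ = Λ₁ ⊔ Λ₂, orthogonality, and splitting of the roots
    (Λ1 Λ2 : Finset (Module.Dual ℝ a))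
    (hdisj : Disjoint (Λ1 : Set (Module.Dual ℝ a)) (Λ2 : Set (Module.Dual ℝ a)))
    (hunion : (Λ : Set (Module.Dual ℝ a)) = ↑Λ1 ∪ ↑Λ2)
    (horth : ∀ α ∈ Λ1, ∀ β ∈ Λ2, ip (Hroot α) (Hroot β) = 0)
    (hsplit : ∀ lam ∈ Sigma,
      lam ∈ Submodule.span ℝ (Λ1 : Set (Module.Dual ℝ a)) ∨
      lam ∈ Submodule.span ℝ (Λ2 : Set (Module.Dual ℝ a))) :
    aPhi Λ1 = aUp Λ2 ∧ nPhi Λ1 = nUp Λ2 ∧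
      ∀ h : Submodule ℝ g, h ⊔ aPhi Λ1 ⊔ nPhi Λ1 = h ⊔ aUp Λ2 ⊔ nUp Λ2 := by
  classical
  -- `ip` as a linear map in each variable
  set φ : g → (g →ₗ[ℝ] ℝ) :=
    fun X => -((killingForm ℝ g X).comp (θ.toLinearEquiv : g →ₗ[ℝ] g)) with hφdef
  have hφ : ∀ X Y : g, φ X Y = ip X Y := by
    intro X Y; simp [hφdef, hip]
  set ψ : g → (g →ₗ[ℝ] ℝ) :=
    fun Y => -((killingForm ℝ g).flip (θ Y)) with hψdef
  have hψ : ∀ X Y : g, ψ Y X = ip X Y := by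
    intro X Y; simp [hψdef, hip]
  -- symmetry of ip
  have hipsym : ∀ X Y : g, ip X Y = ip Y X := by
    intro X Y
    rw [hip, hip]
    congr 1
    calc killingForm ℝ g X (θ Y)
        = killingForm ℝ g (θ X) (θ (θ Y)) := (LieAlgebra.killingForm_of_equiv_apply θ X (θ Y)).symm
      _ = killingForm ℝ g (θ X) Y := by rw [hθinv]
      _ = killingForm ℝ g Y (θ X) := LieModule.traceForm_comm ℝ g g _ _
  -- positive definiteness
  have hdefn : ∀ X : g, ip X X = 0 → X = 0 := by
    intro X h
    by_contra hne
    have := hθpos X hne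
    rw [← hip] at this
    rw [h] at this
    exact lt_irrefl 0 this
  -- linearity of ip in sums of root vectors
  have ip_sum_right : ∀ (s : Finset (Module.Dual ℝ a)) (co : Module.Dual ℝ a → ℝ) (Y : g),
      ip Y (∑ γ ∈ s, co γ • ((Hroot γ : g))) = ∑ γ ∈ s, co γ * ip Y (Hroot γ) := by
    intro s co Y
    rw [← hφ]
    rw [map_sum]
    refine Finset.sum_congr rfl fun γ _ => ?_
    rw [map_smul, smul_eq_mul, hφ]
  have ip_sum_left : ∀ (s : Finset (Module.Dual ℝ a)) (co : Module.Dual ℝ a → ℝ) (Y : g),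
      ip (∑ γ ∈ s, co γ • ((Hroot γ : g))) Y = ∑ γ ∈ s, co γ * ip (Hroot γ) Y := by
    intro s co Y
    rw [← hψ]
    rw [map_sum]
    refine Finset.sum_congr rfl fun γ _ => ?_
    rw [map_smul, smul_eq_mul, hψ]
  -- Λ splits as a disjoint union of finsets
  have hΛdisj : Disjoint Λ1 Λ2 := Finset.disjoint_coe.mp hdisj
  have hΛeq : Λ = Λ1 ∪ Λ2 := Finset.coe_injective (by rw [hunion, Finset.coe_union])
  have hΛ1sub : ∀ α ∈ Λ1, α ∈ Λ := by
    intro α hα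
    have : α ∈ (Λ : Set (Module.Dual ℝ a)) := by
      rw [hunion]; exact Or.inl hα
    exact_mod_cast this
  have hΛ2sub : ∀ β ∈ Λ2, β ∈ Λ := by
    intro β hβ
    have : β ∈ (Λ : Set (Module.Dual ℝ a)) := by
      rw [hunion]; exact Or.inr hβ
    exact_mod_cast this
  -- H_α ∈ aPhi Λ2 for α ∈ Λ1
  have hroot_mem2 : ∀ α ∈ Λ1, ((Hroot α : g)) ∈ aPhi Λ2 := by
    intro α hα
    rw [haPhi]
    refine ⟨(Hroot α).2, fun β hβ => ?_⟩
    have h1 : β (Hroot α) = ip (Hroot β) (Hroot α) := hHroot β (Hroot α)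
    have h2 : ip (Hroot β) (Hroot α) = ip (Hroot α) (Hroot β) := hipsym _ _
    have : (⟨((Hroot α : g)), (Hroot α).2⟩ : a) = Hroot α := rfl
    rw [this, h1, h2, horth α hα β hβ]
  -- first claim: aPhi Λ1 = aUp Λ2
  have haa : aPhi Λ1 = aUp Λ2 := by
    apply le_antisymm
    · -- the hard inclusion
      intro X hX
      rw [haPhi] at hX
      obtain ⟨hXa, hX0⟩ := hX
      -- express ip X ∙ on a in the basis Λ
      set f : Module.Dual ℝ a := (φ X).comp a.subtype with hfdef
      have hfmem : f ∈ Submodule.span ℝ (Λ : Set (Module.Dual ℝ a)) := by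
        rw [hΛ_span]; trivial
      obtain ⟨d, -, hd⟩ := Submodule.mem_span_finset.mp hfmem
      have hXrep : ∀ K : a, ip X (K : g) = ∑ γ ∈ Λ, d γ * γ K := by
        intro K
        have h1 : (∑ γ ∈ Λ, d γ • γ) K = f K := by rw [hd]
        have h2 : f K = ip X (K : g) := by
          rw [hfdef]; exact hφ X (K : g)
        rw [← h2, ← h1]
        simp [LinearMap.sum_apply, LinearMap.smul_apply, smul_eq_mul]
      -- X equals the corresponding combination of root vectors
      set H' : g := ∑ γ ∈ Λ, d γ • ((Hroot γ : g)) with hH'def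
      have hH'a : H' ∈ a := Submodule.sum_mem a fun γ _ => a.smul_mem _ (Hroot γ).2
      have hH'ip : ∀ K : a, ip H' (K : g) = ∑ γ ∈ Λ, d γ * γ K := by
        intro K
        rw [hH'def, ip_sum_left]
        refine Finset.sum_congr rfl fun γ _ => ?_
        rw [← hHroot γ K]
      have hW : X - H' = 0 := by
        apply hdefn
        have hWa : X - H' ∈ a := Submodule.sub_mem a hXa hH'a
        have h1 : ip X (X - H') = ip H' (X - H') := by
          rw [hXrep ⟨X - H', hWa⟩, hH'ip ⟨X - H', hWa⟩]
        have h2 : ip (X - H') (X - H') = ip X (X - H') - ip H' (X - H') := by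
          rw [← hψ, ← hψ, ← hψ, map_sub]
        rw [h2, h1, sub_self]
      have hXH' : X = H' := by
        have := sub_eq_zero.mp hW; exact this
      -- the Λ1-part of the combination vanishes
      have hA : ∀ α ∈ Λ1, ∑ γ ∈ Λ1, d γ * ip (Hroot α) (Hroot γ) = 0 := by
        intro α hα
        have h0 : α (⟨X, hXa⟩ : a) = 0 := hX0 α hα
        have h1 : ip ((Hroot α : g)) X = 0 := by
          rw [← hHroot α ⟨X, hXa⟩]; exact h0
        rw [hXH', hH'def, ip_sum_right] at h1
        rw [hΛeq, Finset.sum_union hΛdisj] at h1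
        have h2 : ∑ γ ∈ Λ2, d γ * ip ((Hroot α : g)) (Hroot γ) = 0 := by
          refine Finset.sum_eq_zero fun γ hγ => ?_
          rw [horth α hα γ hγ, mul_zero]
        rw [h2, add_zero] at h1
        exact h1
      set Z : g := ∑ γ ∈ Λ1, d γ • ((Hroot γ : g)) with hZdef
      have hZ0 : Z = 0 := by
        apply hdefn
        rw [hZdef, ip_sum_left]
        refine Finset.sum_eq_zero fun α hα => ?_
        have : ip ((Hroot α : g)) (∑ γ ∈ Λ1, d γ • ((Hroot γ : g)))
            = ∑ γ ∈ Λ1, d γ * ip ((Hroot α : g)) (Hroot γ) := ip_sum_right _ _ _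
        rw [this, hA α hα, mul_zero]
      have hX2 : X = ∑ γ ∈ Λ2, d γ • ((Hroot γ : g)) := by
        rw [hXH', hH'def, hΛeq, Finset.sum_union hΛdisj, ← hZdef, hZ0, zero_add]
      -- conclude X ∈ aUp Λ2
      rw [haUp]
      refine ⟨hXa, fun Y hY => ?_⟩
      rw [haPhi] at hY
      obtain ⟨hYa, hY0⟩ := hY
      rw [hX2, ip_sum_left]
      refine Finset.sum_eq_zero fun γ hγ => ?_
      have : ip ((Hroot γ : g)) Y = γ (⟨Y, hYa⟩ : a) := (hHroot γ ⟨Y, hYa⟩).symm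
      rw [this, hY0 γ hγ, mul_zero]
    · -- the easy inclusion
      intro X hX
      rw [haUp] at hX
      obtain ⟨hXa, hXorth⟩ := hX
      rw [haPhi]
      refine ⟨hXa, fun α hα => ?_⟩
      have h1 : ip X ((Hroot α : g)) = 0 := hXorth _ (hroot_mem2 α hα)
      calc α (⟨X, hXa⟩ : a) = ip ((Hroot α : g)) X := hHroot α ⟨X, hXa⟩
        _ = ip X ((Hroot α : g)) := hipsym _ _
        _ = 0 := h1
  -- second claim: nPhi Λ1 = nUp Λ2
  have hzero : ∀ μ ∈ Sigma, μ ≠ 0 := by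
    rw [hSigma]; exact fun μ h => h.1
  have hspan_disj : Disjoint (Submodule.span ℝ (Λ1 : Set (Module.Dual ℝ a)))
      (Submodule.span ℝ (Λ2 : Set (Module.Dual ℝ a))) := by
    have hpre : Disjoint
        (((↑) : {x // x ∈ Λ} → Module.Dual ℝ a) ⁻¹' (Λ1 : Set (Module.Dual ℝ a)))
        (((↑) : {x // x ∈ Λ} → Module.Dual ℝ a) ⁻¹' (Λ2 : Set (Module.Dual ℝ a))) :=
      hdisj.preimage _
    have h := hΛ_indep.disjoint_span_image hpre
    have him1 : (fun x : {x // x ∈ Λ} => (x : Module.Dual ℝ a)) ''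
        (((↑) : {x // x ∈ Λ} → Module.Dual ℝ a) ⁻¹' (Λ1 : Set (Module.Dual ℝ a)))
        = (Λ1 : Set (Module.Dual ℝ a)) := by
      ext y
      constructor
      · rintro ⟨⟨x, hx⟩, hmem, rfl⟩; exact hmem
      · intro hy; exact ⟨⟨y, hΛ1sub y (by exact_mod_cast hy)⟩, hy, rfl⟩
    have him2 : (fun x : {x // x ∈ Λ} => (x : Module.Dual ℝ a)) ''
        (((↑) : {x // x ∈ Λ} → Module.Dual ℝ a) ⁻¹' (Λ2 : Set (Module.Dual ℝ a)))
        = (Λ2 : Set (Module.Dual ℝ a)) := by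
      ext y
      constructor
      · rintro ⟨⟨x, hx⟩, hmem, rfl⟩; exact hmem
      · intro hy; exact ⟨⟨y, hΛ2sub y (by exact_mod_cast hy)⟩, hy, rfl⟩
    rwa [him1, him2] at h
  have hsets : {μ | μ ∈ Splus ∧ μ ∉ Submodule.span ℝ (Λ1 : Set (Module.Dual ℝ a))}
      = {μ | μ ∈ Splus ∧ μ ∈ Submodule.span ℝ (Λ2 : Set (Module.Dual ℝ a))} := by
    ext μ
    constructor
    · rintro ⟨hs, hn1⟩
      exact ⟨hs, (hsplit μ (hSplus_sub hs)).resolve_left hn1⟩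
    · rintro ⟨hs, h2⟩
      refine ⟨hs, fun h1 => ?_⟩
      exact hzero μ (hSplus_sub hs) (Submodule.disjoint_def.mp hspan_disj μ h1 h2)
  have hnn : nPhi Λ1 = nUp Λ2 := by
    rw [hnPhi, hnUp, hsets]
  exact ⟨haa, hnn, fun h => by rw [haa, hnn]⟩
end

section
/- Let α_j ∈ Φ ⊆ Λ, write Ψ = Φ∖{α_j}, and let 𝔳 be any subspace of 𝔫¹_{Ψ,Φ}. Then N_{𝔩_{Ψ,Φ}}(𝔫_{Ψ,Φ} ⊖ 𝔳) + (𝔫_{Ψ,Φ} ⊖ 𝔳) + 𝔞_Φ + 𝔫_Φ ⊆ N_{𝔩_{Λ∖{α_j}}}(𝔫_{Λ∖{α_j}} ⊖ 𝔳) + (𝔫_{Λ∖{α_j}} ⊖ 𝔳). (This is the final containment 𝔥^Λ_Φ ⊆ 𝔥_{Λ∖{α_j},𝔳} established in the proof of Lemma 5.3 of the paper: the canonical extension of a nilpotent construction on the boundary component B_Φ is contained in the corresponding nilpotent construction on M.) -/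
/-- The normalizer of the subspace `W` inside the subspace `l`:
`N_l(W) = {X ∈ l : ⁅X, W⁆ ⊆ W}`. -/
def normalizerIn {g : Type} [LieRing g] [LieAlgebra ℝ g] (l W : Submodule ℝ g) :
    Submodule ℝ g where
  carrier := {X : g | X ∈ l ∧ ∀ w ∈ W, ⁅X, w⁆ ∈ W}
  add_mem' := by
    rintro x y ⟨hx, hx'⟩ ⟨hy, hy'⟩
    exact ⟨l.add_mem hx hy, fun w hw => by
      rw [add_lie]; exact W.add_mem (hx' w hw) (hy' w hw)⟩
  zero_mem' := ⟨l.zero_mem, fun w hw => by rw [zero_lie]; exact W.zero_mem⟩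
  smul_mem' := by
    rintro t x ⟨hx, hx'⟩
    exact ⟨l.smul_mem t hx, fun w hw => by
      rw [smul_lie]; exact W.smul_mem t (hx' w hw)⟩

/-- The orthogonal complement `V ⊖ W` of `W` in `V` with respect to the inner product
`⟨X, Y⟩ = -B(X, θY)` associated with the Cartan involution `θ` and the Killing form `B`. -/
def orthCompl {g : Type} [LieRing g] [LieAlgebra ℝ g] [Module.Finite ℝ g]
    (θ : g ≃ₗ⁅ℝ⁆ g) (V W : Submodule ℝ g) : Submodule ℝ g where
  carrier := {X : g | X ∈ V ∧ ∀ w ∈ W, killingForm ℝ g X (θ w) = 0}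
  add_mem' := by
    rintro x y ⟨hx, hx'⟩ ⟨hy, hy'⟩
    refine ⟨V.add_mem hx hy, fun w hw => ?_⟩
    rw [map_add, LinearMap.add_apply, hx' w hw, hy' w hw, add_zero]
  zero_mem' := ⟨V.zero_mem, fun w hw => by rw [map_zero, LinearMap.zero_apply]⟩
  smul_mem' := by
    rintro t x ⟨hx, hx'⟩
    refine ⟨V.smul_mem t hx, fun w hw => ?_⟩
    rw [map_smul, LinearMap.smul_apply, hx' w hw, smul_zero]

/-- The subspace spanned by all brackets `⁅x, y⁆` with `x ∈ U`, `y ∈ V`. -/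
def bracketSpan {g : Type} [LieRing g] [LieAlgebra ℝ g] (U V : Submodule ℝ g) :
    Submodule ℝ g :=
  Submodule.span ℝ {z : g | ∃ x ∈ U, ∃ y ∈ V, z = ⁅x, y⁆}


private lemma mem_normalizerIn {g : Type} [LieRing g] [LieAlgebra ℝ g]
    {l W : Submodule ℝ g} {X : g} :
    X ∈ normalizerIn l W ↔ X ∈ l ∧ ∀ w ∈ W, ⁅X, w⁆ ∈ W := Iff.rfl

private lemma mem_orthCompl {g : Type} [LieRing g] [LieAlgebra ℝ g] [Module.Finite ℝ g]
    {θ : g ≃ₗ⁅ℝ⁆ g} {V W : Submodule ℝ g} {X : g} :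
    X ∈ orthCompl θ V W ↔ X ∈ V ∧ ∀ w ∈ W, killingForm ℝ g X (θ w) = 0 := Iff.rfl

/-- final containment in the proof of Lemma 5.3. Let `α_j ∈ Φ ⊆ Λ`,
`Ψ = Φ∖{α_j}`, and let `𝔳` be any subspace of `𝔫¹_{Ψ,Φ}`.  Then
`N_{𝔩_{Ψ,Φ}}(𝔫_{Ψ,Φ} ⊖ 𝔳) + (𝔫_{Ψ,Φ} ⊖ 𝔳) + 𝔞_Φ + 𝔫_Φ
  ⊆ N_{𝔩_{Λ∖{α_j}}}(𝔫_{Λ∖{α_j}} ⊖ 𝔳) + (𝔫_{Λ∖{α_j}} ⊖ 𝔳)`. -/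
theorem canonical_extension_of_nilpotent_construction_containment
    {g : Type} [LieRing g] [LieAlgebra ℝ g] [FiniteDimensional ℝ g]
    [LieAlgebra.IsSemisimple ℝ g]
    -- Cartan involution and the associated inner product
    (θ : g ≃ₗ⁅ℝ⁆ g) (hθinv : ∀ X, θ (θ X) = X)
    (hθpos : ∀ X : g, X ≠ 0 → 0 < -(killingForm ℝ g X (θ X)))
    (ip : g → g → ℝ) (hip : ∀ X Y : g, ip X Y = -(killingForm ℝ g X (θ Y)))
    -- maximal abelian subspace 𝔞 of 𝔭
    (a : Submodule ℝ g)
    [DecidableEq (Module.Dual ℝ a)]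
    (ha_p : ∀ H ∈ a, θ H = -H)
    (ha_ab : ∀ H ∈ a, ∀ H' ∈ a, ⁅H, H'⁆ = (0 : g))
    (ha_max : ∀ X : g, θ X = -X → (∀ H ∈ a, ⁅H, X⁆ = 0) → X ∈ a)
    -- restricted root spaces and restricted roots
    (gsp : Module.Dual ℝ a → Submodule ℝ g)
    (hgsp : ∀ (lam : Module.Dual ℝ a) (X : g),
      X ∈ gsp lam ↔ ∀ H : a, ⁅(H : g), X⁆ = lam H • X)
    (Sigma : Set (Module.Dual ℝ a))
    (hSigma : Sigma = {lam | lam ≠ 0 ∧ gsp lam ≠ ⊥})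
    (hdecomp : (⨆ lam ∈ insert (0 : Module.Dual ℝ a) Sigma, gsp lam) = ⊤)
    -- positive and simple roots
    (Splus : Set (Module.Dual ℝ a))
    (hSplus_sub : Splus ⊆ Sigma)
    (hSigma_split : Sigma = Splus ∪ (Neg.neg '' Splus))
    (hSplus_disj : ∀ lam ∈ Splus, -lam ∉ Splus)
    (Λ : Finset (Module.Dual ℝ a))
    (hΛ_sub : (Λ : Set (Module.Dual ℝ a)) ⊆ Splus)
    (hΛ_indep : LinearIndependent ℝ
      (fun x : {x // x ∈ Λ} => (x : Module.Dual ℝ a)))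
    (hΛ_span : Submodule.span ℝ (Λ : Set (Module.Dual ℝ a)) = ⊤)
    (c : Module.Dual ℝ a → Module.Dual ℝ a → ℤ)
    (hc : ∀ lam ∈ Sigma, lam = ∑ α ∈ Λ, (c lam α : ℝ) • α)
    (hc_pos : ∀ lam ∈ Splus, ∀ α ∈ Λ, 0 ≤ c lam α)
    (hc_neg : ∀ lam ∈ Sigma, lam ∉ Splus → ∀ α ∈ Λ, c lam α ≤ 0)
    -- the subspaces 𝔞_Φ and 𝔞^Φ
    (aPhi : Finset (Module.Dual ℝ a) → Submodule ℝ g)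
    (haPhi : ∀ (Φ : Finset (Module.Dual ℝ a)) (X : g),
      X ∈ aPhi Φ ↔ ∃ hX : X ∈ a, ∀ α ∈ Φ, α ⟨X, hX⟩ = 0)
    (aUp : Finset (Module.Dual ℝ a) → Submodule ℝ g)
    (haUp : ∀ (Φ : Finset (Module.Dual ℝ a)) (X : g),
      X ∈ aUp Φ ↔ X ∈ a ∧ ∀ Y ∈ aPhi Φ, ip X Y = 0)
    -- the spaces 𝔭_λ = {X − θX : X ∈ 𝔤_λ}
    (pl : Module.Dual ℝ a → Submodule ℝ g)
    (hpl : ∀ lam : Module.Dual ℝ a,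
      (pl lam : Set g) = {Z : g | ∃ X ∈ gsp lam, Z = X - θ X})
    -- the data: α_j ∈ Φ ⊆ Λ; write Ψ = Φ.erase αj
    (αj : Module.Dual ℝ a) (Φ : Finset (Module.Dual ℝ a))
    (hαjΦ : αj ∈ Φ) (hΦΛ : Φ ⊆ Λ)
    -- 𝔟_Φ and 𝔰_Φ
    (bPhi : Submodule ℝ g)
    (hbPhi : bPhi = aUp Φ ⊔ ⨆ lam ∈ {μ | μ ∈ Splus ∧
        μ ∈ Submodule.span ℝ (Φ : Set (Module.Dual ℝ a))}, pl lam)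
    (sPhi : Submodule ℝ g)
    (hsPhi : sPhi = bracketSpan bPhi bPhi ⊔ bPhi)
    -- 𝔫_Φ, 𝔫_{Ψ,Φ}, 𝔫¹_{Ψ,Φ} and 𝔩_{Ψ,Φ}
    (nPhi : Submodule ℝ g)
    (hnPhi : nPhi = ⨆ lam ∈ {μ | μ ∈ Splus ∧
        μ ∉ Submodule.span ℝ (Φ : Set (Module.Dual ℝ a))}, gsp lam)
    (nPsiPhi : Submodule ℝ g)
    (hnPsiPhi : nPsiPhi = ⨆ lam ∈ {μ | μ ∈ Splus ∧
        μ ∈ Submodule.span ℝ (Φ : Set (Module.Dual ℝ a)) ∧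
        μ ∉ Submodule.span ℝ ((Φ.erase αj : Finset (Module.Dual ℝ a)) :
          Set (Module.Dual ℝ a))}, gsp lam)
    (n1 : Submodule ℝ g)
    (hn1 : n1 = ⨆ lam ∈ {μ | μ ∈ Splus ∧
        μ ∈ Submodule.span ℝ (Φ : Set (Module.Dual ℝ a)) ∧ c μ αj = 1}, gsp lam)
    (lPsiPhi : Submodule ℝ g)
    (hlPsiPhi : lPsiPhi = (sPhi ⊓ gsp 0) ⊔ ⨆ lam ∈ {μ | μ ∈ Sigma ∧
        μ ∈ Submodule.span ℝ ((Φ.erase αj : Finset (Module.Dual ℝ a)) :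
          Set (Module.Dual ℝ a))}, gsp lam)
    -- 𝔩_{Λ∖{α_j}} and 𝔫_{Λ∖{α_j}}
    (lLam : Submodule ℝ g)
    (hlLam : lLam = gsp 0 ⊔ ⨆ lam ∈ {μ | μ ∈ Sigma ∧
        μ ∈ Submodule.span ℝ ((Λ.erase αj : Finset (Module.Dual ℝ a)) :
          Set (Module.Dual ℝ a))}, gsp lam)
    (nLam : Submodule ℝ g)
    (hnLam : nLam = ⨆ lam ∈ {μ | μ ∈ Splus ∧
        μ ∉ Submodule.span ℝ ((Λ.erase αj : Finset (Module.Dual ℝ a)) :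
          Set (Module.Dual ℝ a))}, gsp lam)
    -- the subspace 𝔳 of 𝔫¹_{Ψ,Φ}
    (v : Submodule ℝ g) (hv : v ≤ n1) :
    normalizerIn lPsiPhi (orthCompl θ nPsiPhi v) ⊔ orthCompl θ nPsiPhi v
        ⊔ aPhi Φ ⊔ nPhi
      ≤ normalizerIn lLam (orthCompl θ nLam v) ⊔ orthCompl θ nLam v := by

  classical
  -- Abbreviations for the three spans
  set sF := Submodule.span ℝ (Φ : Set (Module.Dual ℝ a)) with hsFdef
  set sP := Submodule.span ℝ ((Φ.erase αj : Finset (Module.Dual ℝ a)) :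
      Set (Module.Dual ℝ a)) with hsPdef
  set sL := Submodule.span ℝ ((Λ.erase αj : Finset (Module.Dual ℝ a)) :
      Set (Module.Dual ℝ a)) with hsLdef
  have hαjΛ : αj ∈ Λ := hΦΛ hαjΦ
  have hΨΛ : Φ.erase αj ⊆ Λ := Finset.Subset.trans (Finset.erase_subset _ _) hΦΛ
  have hΛeΛ : Λ.erase αj ⊆ Λ := Finset.erase_subset _ _
  have hsΨΛe : sP ≤ sL := by
    rw [hsPdef, hsLdef]
    exact Submodule.span_mono (by
      exact_mod_cast Finset.coe_subset.mpr (Finset.erase_subset_erase αj hΦΛ))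
  -- uniqueness of coefficients
  have huniq : ∀ f : Module.Dual ℝ a → ℝ, (∑ α ∈ Λ, f α • α) = 0 → ∀ α ∈ Λ, f α = 0 := by
    intro f hf α hα
    refine linearIndependent_iff'.mp hΛ_indep Finset.univ (fun x => f x) ?_ ⟨α, hα⟩
      (Finset.mem_univ _)
    rw [Finset.univ_eq_attach, Finset.sum_attach Λ (fun β => f β • β)]
    exact hf
  have hrep : ∀ lam ∈ Sigma, ∀ f : Module.Dual ℝ a → ℝ,
      lam = ∑ α ∈ Λ, f α • α → ∀ α ∈ Λ, f α = (c lam α : ℝ) := by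
    intro lam hlam f hf α hα
    have h0 : ∑ α ∈ Λ, (f α - (c lam α : ℝ)) • α = 0 := by
      have he : ∑ α ∈ Λ, (f α - (c lam α : ℝ)) • α
          = (∑ α ∈ Λ, f α • α) - ∑ α ∈ Λ, (c lam α : ℝ) • α := by
        rw [← Finset.sum_sub_distrib]
        exact Finset.sum_congr rfl fun β _ => by module
      rw [he, ← hf, ← hc lam hlam, sub_self]
    have := huniq _ h0 α hα
    linarith
  have hspan : ∀ lam ∈ Sigma, ∀ S : Finset (Module.Dual ℝ a), S ⊆ Λ →
      (lam ∈ Submodule.span ℝ (S : Set (Module.Dual ℝ a)) ↔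
        ∀ α ∈ Λ, α ∉ S → c lam α = 0) := by
    intro lam hlam S hS
    constructor
    · intro h α hα hαS
      obtain ⟨f, -, hf⟩ := Submodule.mem_span_finset.mp h
      have hf' : lam = ∑ β ∈ Λ, (if β ∈ S then f β else 0) • β := by
        rw [← Finset.sum_subset hS (fun β _ hβS => by rw [if_neg hβS, zero_smul])]
        rw [← hf]
        exact (Finset.sum_congr rfl fun β hβ => by rw [if_pos hβ]).symm
      have h2 := hrep lam hlam _ hf' α hα
      rw [if_neg hαS] at h2
      exact_mod_cast h2.symm
    · intro h
      have he : ∑ β ∈ Λ, (c lam β : ℝ) • β = ∑ β ∈ S, (c lam β : ℝ) • β :=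
        (Finset.sum_subset hS (fun β hβ hβS => by rw [h β hβ hβS]; simp)).symm
      rw [hc lam hlam, he]
      exact Submodule.sum_mem _ fun β hβ =>
        Submodule.smul_mem _ _ (Submodule.subset_span (Finset.mem_coe.mpr hβ))
  -- bracket of root spaces
  have hbr : ∀ (lam mu : Module.Dual ℝ a) (X Y : g), X ∈ gsp lam → Y ∈ gsp mu →
      ⁅X, Y⁆ ∈ gsp (lam + mu) := by
    intro lam mu X Y hX hY
    rw [hgsp]
    intro H
    rw [leibniz_lie, (hgsp lam X).mp hX H, (hgsp mu Y).mp hY H, smul_lie, lie_smul,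
      LinearMap.add_apply, add_smul]
  -- θ maps root spaces
  have hθg : ∀ (lam : Module.Dual ℝ a) (X : g), X ∈ gsp lam → θ X ∈ gsp (-lam) := by
    intro lam X hX
    rw [hgsp]
    intro H
    have e1 : θ ⁅θ (H : g), X⁆ = ⁅θ (θ (H : g)), θ X⁆ := LieEquiv.map_lie θ _ _
    rw [hθinv] at e1
    rw [ha_p _ H.2] at e1
    have e2 : ⁅-(H : g), X⁆ = -(lam H • X) := by
      rw [neg_lie, (hgsp lam X).mp hX H]
    rw [← e1, e2, ← LieEquiv.coe_toLieHom θ, map_neg, map_smul,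
      LinearMap.neg_apply, neg_smul]
  -- invariance of the Killing form
  have hinv : ∀ x y z : g, killingForm ℝ g ⁅x, y⁆ z = - killingForm ℝ g y ⁅x, z⁆ := by
    intro x y z
    have h1 : killingForm ℝ g ⁅y, x⁆ z = killingForm ℝ g y ⁅x, z⁆ :=
      LieModule.traceForm_apply_lie_apply ℝ g g y x z
    calc killingForm ℝ g ⁅x, y⁆ z = killingForm ℝ g (-⁅y, x⁆) z := by rw [lie_skew]
      _ = -(killingForm ℝ g ⁅y, x⁆ z) := by rw [map_neg, LinearMap.neg_apply]
      _ = - killingForm ℝ g y ⁅x, z⁆ := by rw [h1]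
  -- orthogonality of root spaces
  have hB0 : ∀ (lam mu : Module.Dual ℝ a), lam + mu ≠ 0 → ∀ X ∈ gsp lam, ∀ Y ∈ gsp mu,
      killingForm ℝ g X Y = 0 := by
    intro lam mu hne X hX Y hY
    have hH : ∃ H : a, lam H + mu H ≠ 0 := by
      by_contra h
      push_neg at h
      exact hne (LinearMap.ext fun H => by simpa using h H)
    obtain ⟨H, hH⟩ := hH
    have e1 : killingForm ℝ g ⁅(H : g), X⁆ Y = - killingForm ℝ g X ⁅(H : g), Y⁆ :=
      hinv _ _ _
    rw [(hgsp lam X).mp hX H, (hgsp mu Y).mp hY H] at e1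
    simp only [map_smul, LinearMap.smul_apply, smul_eq_mul] at e1
    have h2 : (lam H + mu H) * killingForm ℝ g X Y = 0 := by
      rw [add_mul]; linarith
    rcases mul_eq_zero.mp h2 with h | h
    · exact absurd h hH
    · exact h
  have hbot : ∀ nu : Module.Dual ℝ a, nu ≠ 0 → nu ∉ Sigma → gsp nu = ⊥ := by
    intro nu h0 hS
    by_contra h
    exact hS (by rw [hSigma]; exact ⟨h0, h⟩)
  -- supremum helpers
  have hle : ∀ (S : Set (Module.Dual ℝ a)), ∀ mu ∈ S, gsp mu ≤ ⨆ lam ∈ S, gsp lam :=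
    fun S mu hmu => le_iSup₂ (f := fun lam _ => gsp lam) mu hmu
  have hsup : ∀ (S : Set (Module.Dual ℝ a)) (M : Submodule ℝ g),
      (∀ mu ∈ S, gsp mu ≤ M) → (⨆ lam ∈ S, gsp lam) ≤ M :=
    fun S M h => iSup₂_le h
  have hsup_mem : ∀ (S : Set (Module.Dual ℝ a)) (M : Submodule ℝ g) (X : g),
      (∀ mu ∈ S, ∀ z ∈ gsp mu, ⁅X, z⁆ ∈ M) →
      ∀ w ∈ (⨆ lam ∈ S, gsp lam), ⁅X, w⁆ ∈ M := by
    intro S M X h w hw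
    have hker : (⨆ lam ∈ S, gsp lam) ≤ Submodule.comap (LieAlgebra.ad ℝ g X) M := by
      refine iSup₂_le fun mu hmu z hz => ?_
      rw [Submodule.mem_comap, LieAlgebra.ad_apply]
      exact h mu hmu z hz
    have := hker hw
    rwa [Submodule.mem_comap, LieAlgebra.ad_apply] at this
  have hsup_killing : ∀ (S : Set (Module.Dual ℝ a)) (X : g),
      (∀ mu ∈ S, ∀ z ∈ gsp mu, killingForm ℝ g X (θ z) = 0) →
      ∀ w ∈ (⨆ lam ∈ S, gsp lam), killingForm ℝ g X (θ w) = 0 := by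
    intro S X h w hw
    have hker : (⨆ lam ∈ S, gsp lam) ≤
        LinearMap.ker ((killingForm ℝ g X) ∘ₗ (θ.toLinearEquiv : g →ₗ[ℝ] g)) := by
      refine iSup₂_le fun mu hmu z hz => ?_
      rw [LinearMap.mem_ker, LinearMap.comp_apply]
      exact h mu hmu z hz
    have := hker hw
    rw [LinearMap.mem_ker, LinearMap.comp_apply] at this
    exact this
  have hsup_lie0 : ∀ (S : Set (Module.Dual ℝ a)) (X : g),
      (∀ mu ∈ S, ∀ z ∈ gsp mu, ⁅X, θ z⁆ = 0) →
      ∀ w ∈ (⨆ lam ∈ S, gsp lam), ⁅X, θ w⁆ = 0 := by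
    intro S X h w hw
    have hker : (⨆ lam ∈ S, gsp lam) ≤
        LinearMap.ker ((LieAlgebra.ad ℝ g X) ∘ₗ (θ.toLinearEquiv : g →ₗ[ℝ] g)) := by
      refine iSup₂_le fun mu hmu z hz => ?_
      rw [LinearMap.mem_ker, LinearMap.comp_apply]
      have := h mu hmu z hz
      rw [← LieAlgebra.ad_apply (R := ℝ)] at this
      exact this
    have := hker hw
    rw [LinearMap.mem_ker, LinearMap.comp_apply] at this
    rw [← LieAlgebra.ad_apply (R := ℝ)]
    exact this
  -- coefficient arithmetic
  have hcadd : ∀ lam mu : Module.Dual ℝ a, lam ∈ Sigma → mu ∈ Sigma → lam + mu ∈ Sigma →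
      ∀ α ∈ Λ, (c (lam + mu) α : ℝ) = (c lam α : ℝ) + (c mu α : ℝ) := by
    intro lam mu h1 h2 h3 α hα
    refine (hrep (lam + mu) h3 (fun β => (c lam β : ℝ) + (c mu β : ℝ)) ?_ α hα).symm
    conv_lhs => rw [hc lam h1, hc mu h2]
    rw [← Finset.sum_add_distrib]
    exact Finset.sum_congr rfl fun β _ => by module
  have hadd0 : ∀ lam mu : Module.Dual ℝ a, lam ∈ Sigma → mu ∈ Sigma → lam + mu = 0 →
      ∀ α ∈ Λ, (c lam α : ℝ) + (c mu α : ℝ) = 0 := by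
    intro lam mu h1 h2 h3 α hα
    refine huniq (fun β => (c lam β : ℝ) + (c mu β : ℝ)) ?_ α hα
    have he : ∑ β ∈ Λ, ((c lam β : ℝ) + (c mu β : ℝ)) • β = lam + mu := by
      conv_rhs => rw [hc lam h1, hc mu h2]
      rw [← Finset.sum_add_distrib]
      exact Finset.sum_congr rfl fun β _ => by module
    rw [he, h3]
  have hcsub : ∀ lam mu : Module.Dual ℝ a, lam ∈ Sigma → mu ∈ Sigma → lam + -mu ∈ Sigma →
      ∀ α ∈ Λ, (c (lam + -mu) α : ℝ) = (c lam α : ℝ) - (c mu α : ℝ) := by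
    intro lam mu h1 h2 h3 α hα
    refine (hrep _ h3 (fun β => (c lam β : ℝ) - (c mu β : ℝ)) ?_ α hα).symm
    conv_lhs => rw [hc lam h1, hc mu h2]
    rw [← sub_eq_add_neg, ← Finset.sum_sub_distrib]
    exact Finset.sum_congr rfl fun β _ => by module
  -- basic coefficient facts
  have hc0e : ∀ lam ∈ Sigma, lam ∈ sL → c lam αj = 0 := fun lam h1 h2 =>
    (hspan lam h1 _ hΛeΛ).mp h2 αj hαjΛ (Finset.notMem_erase _ _)
  have hspanΦ0 : ∀ mu ∈ Sigma, mu ∈ sF → ∀ α ∈ Λ, α ∉ Φ → c mu α = 0 := fun mu h1 h2 =>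
    (hspan mu h1 _ hΦΛ).mp h2
  have hc1 : ∀ mu, mu ∈ Splus → mu ∉ sL → 1 ≤ c mu αj := by
    intro mu h1 h2
    have h3 := hc_pos mu h1 αj hαjΛ
    rcases lt_or_eq_of_le h3 with h | h
    · omega
    · exfalso
      refine h2 ((hspan mu (hSplus_sub h1) _ hΛeΛ).mpr ?_)
      intro α hα hαe
      have hh : α = αj := by
        by_contra hne
        exact hαe (Finset.mem_erase.mpr ⟨hne, hα⟩)
      rw [hh]
      exact h.symm
  have hexΦ : ∀ mu, mu ∈ Splus → mu ∉ sF → ∃ α ∈ Λ, α ∉ Φ ∧ 1 ≤ c mu α := by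
    intro mu h1 h2
    by_contra h
    push_neg at h
    refine h2 ((hspan mu (hSplus_sub h1) Φ hΦΛ).mpr ?_)
    intro α hα hαΦ
    have h4 := hc_pos mu h1 α hα
    have h5 := h α hα hαΦ
    omega
  have hmemN : ∀ nu, nu ∈ Sigma → 1 ≤ c nu αj → nu ∈ Splus ∧ nu ∉ sL := by
    intro nu h1 h2
    have hp : nu ∈ Splus := by
      by_contra h
      have := hc_neg nu h1 h αj hαjΛ
      omega
    exact ⟨hp, fun hsp => by have := hc0e nu h1 hsp; omega⟩
  -- v inside the sup form of n1
  have hvn1 : v ≤ ⨆ lam ∈ {μ | μ ∈ Splus ∧ μ ∈ sF ∧ c μ αj = 1}, gsp lam := by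
    rw [← hn1]; exact hv
  -- root vectors outside span Φ are ⟂ θ(v)
  have hXv_orth : ∀ lam, lam ∈ Splus → lam ∉ sF → ∀ X ∈ gsp lam, ∀ w ∈ v,
      killingForm ℝ g X (θ w) = 0 := by
    intro lam h1 h2 X hX w hw
    refine hsup_killing _ X ?_ w (hvn1 hw)
    rintro mu ⟨hm1, hm2, hm3⟩ z hz
    refine hB0 lam (-mu) ?_ X hX (θ z) (hθg mu z hz)
    intro h0
    exact h2 ((add_neg_eq_zero.mp h0).symm ▸ hm2)
  -- root vectors with c(·,αj)=0 outside span Φ bracket θ(v) to zero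
  have hXv_lie : ∀ lam, lam ∈ Splus → lam ∉ sF → lam ∈ sL →
      ∀ X ∈ gsp lam, ∀ w ∈ v, ⁅X, θ w⁆ = 0 := by
    intro lam h1 h2 h3 X hX w hw
    refine hsup_lie0 _ X ?_ w (hvn1 hw)
    rintro mu ⟨hm1, hm2, hm3⟩ z hz
    have hmem := hbr lam (-mu) X (θ z) hX (hθg mu z hz)
    have hne : lam + -mu ≠ 0 := by
      intro h0
      exact h2 ((add_neg_eq_zero.mp h0).symm ▸ hm2)
    have hbotν : gsp (lam + -mu) = ⊥ := by
      refine hbot _ hne ?_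
      intro hν
      obtain ⟨α₀, hα₀Λ, hα₀Φ, hα₀c⟩ := hexΦ lam h1 h2
      have hclj : c lam αj = 0 := hc0e lam (hSplus_sub h1) h3
      have hcmα₀ : c mu α₀ = 0 := hspanΦ0 mu (hSplus_sub hm1) hm2 α₀ hα₀Λ hα₀Φ
      have hj : c (lam + -mu) αj = c lam αj - c mu αj := by
        exact_mod_cast hcsub lam mu (hSplus_sub h1) (hSplus_sub hm1) hν αj hαjΛ
      have hα : c (lam + -mu) α₀ = c lam α₀ - c mu α₀ := by
        exact_mod_cast hcsub lam mu (hSplus_sub h1) (hSplus_sub hm1) hν α₀ hα₀Λ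
      by_cases hνS : lam + -mu ∈ Splus
      · have := hc_pos _ hνS αj hαjΛ
        omega
      · have := hc_neg _ hν hνS α₀ hα₀Λ
        omega
    rw [hbotν, Submodule.mem_bot] at hmem
    exact hmem
  -- elements of 𝔞_Φ bracket θ(v) to zero
  have hHv_lie : ∀ H : a, (∀ α ∈ Φ, α H = 0) → ∀ w ∈ v, ⁅(H : g), θ w⁆ = 0 := by
    intro H hH w hw
    have hev : ∀ mu ∈ sF, mu H = 0 := by
      intro mu hmu
      have hker : sF ≤ LinearMap.ker (Module.Dual.eval ℝ a H) := by
        rw [hsFdef, Submodule.span_le]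
        intro α hα
        rw [SetLike.mem_coe, LinearMap.mem_ker, Module.Dual.eval_apply]
        exact hH α (Finset.mem_coe.mp hα)
      have hm := hker hmu
      rwa [LinearMap.mem_ker, Module.Dual.eval_apply] at hm
    refine hsup_lie0 _ (H : g) ?_ w (hvn1 hw)
    rintro mu ⟨hm1, hm2, hm3⟩ z hz
    have he : ⁅(H : g), θ z⁆ = (-mu) H • θ z := (hgsp _ _).mp (hθg mu z hz) H
    rw [he, LinearMap.neg_apply, hev mu hm2, neg_zero, zero_smul]
  -- W ≤ W'
  have hnPsi_nLam : (⨆ lam ∈ {μ | μ ∈ Splus ∧ μ ∈ sF ∧ μ ∉ sP}, gsp lam) ≤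
      (⨆ lam ∈ {μ | μ ∈ Splus ∧ μ ∉ sL}, gsp lam) := by
    refine hsup _ _ ?_
    rintro mu ⟨h1, h2, h3⟩
    refine hle _ mu ⟨h1, fun hmem => h3 ?_⟩
    refine (hspan mu (hSplus_sub h1) _ hΨΛ).mpr ?_
    intro α hα hαΨ
    by_cases hα' : α = αj
    · rw [hα']
      exact hc0e mu (hSplus_sub h1) hmem
    · refine hspanΦ0 mu (hSplus_sub h1) h2 α hα ?_
      intro hαΦ
      exact hαΨ (Finset.mem_erase.mpr ⟨hα', hαΦ⟩)
  have hWW' : orthCompl θ nPsiPhi v ≤ orthCompl θ nLam v := by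
    intro x hx
    obtain ⟨h1, h2⟩ := mem_orthCompl.mp hx
    rw [hnPsiPhi] at h1
    exact mem_orthCompl.mpr ⟨by rw [hnLam]; exact hnPsi_nLam h1, h2⟩
  -- bracket lands in nLam
  have hbr_nLam : ∀ lam mu : Module.Dual ℝ a, lam ∈ Sigma → c lam αj = 0 →
      mu ∈ Splus → mu ∉ sL →
      gsp (lam + mu) ≤ ⨆ l ∈ {μ : Module.Dual ℝ a | μ ∈ Splus ∧ μ ∉ sL}, gsp l := by
    intro lam mu h1 hclj h3 h5
    by_cases hb : gsp (lam + mu) = ⊥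
    · rw [hb]; exact bot_le
    have hcmj : 1 ≤ c mu αj := hc1 mu h3 h5
    rcases eq_or_ne (lam + mu) 0 with h0 | h0
    · exfalso
      have h' := hadd0 lam mu h1 (hSplus_sub h3) h0 αj hαjΛ
      have h'' : c lam αj + c mu αj = 0 := by exact_mod_cast h'
      omega
    have hν : lam + mu ∈ Sigma := by
      by_contra h
      exact hb (hbot _ h0 h)
    have hj : c (lam + mu) αj = c lam αj + c mu αj := by
      exact_mod_cast hcadd lam mu h1 (hSplus_sub h3) hν αj hαjΛ
    obtain ⟨hνS, hνe⟩ := hmemN _ hν (by omega)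
    exact hle _ (lam + mu) ⟨hνS, hνe⟩
  -- nRest
  set nR : Submodule ℝ g :=
    ⨆ lam ∈ {μ : Module.Dual ℝ a | μ ∈ Splus ∧ μ ∉ sF ∧ μ ∉ sL}, gsp lam with hnRdef
  have hnR_W' : nR ≤ orthCompl θ nLam v := by
    rw [hnRdef]
    refine hsup _ _ ?_
    rintro mu ⟨h1, h2, h3⟩
    intro X hX
    exact mem_orthCompl.mpr ⟨by rw [hnLam]; exact hle _ mu (by exact ⟨h1, h3⟩) hX,
      hXv_orth mu h1 h2 X hX⟩
  have hnLam_split : nLam ≤ nPsiPhi ⊔ nR := by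
    rw [hnLam, hnPsiPhi, hnRdef]
    refine hsup _ _ ?_
    rintro mu ⟨h1, h2⟩
    by_cases hΦm : mu ∈ sF
    · exact le_sup_of_le_left (hle _ mu ⟨h1, hΦm, fun hΨm => h2 (hsΨΛe hΨm)⟩)
    · exact le_sup_of_le_right (hle _ mu ⟨h1, hΦm, h2⟩)
  have hbr_nR : ∀ lam mu : Module.Dual ℝ a, lam ∈ Sigma → lam ∈ sP →
      mu ∈ Splus → mu ∉ sF → mu ∉ sL → gsp (lam + mu) ≤ nR := by
    intro lam mu h1 h2 h3 h4 h5
    by_cases hb : gsp (lam + mu) = ⊥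
    · rw [hb]; exact bot_le
    have hΨc : ∀ α ∈ Λ, α ∉ Φ.erase αj → c lam α = 0 := (hspan lam h1 _ hΨΛ).mp h2
    have hclj : c lam αj = 0 := hΨc αj hαjΛ (Finset.notMem_erase _ _)
    have hcmj : 1 ≤ c mu αj := hc1 mu h3 h5
    obtain ⟨α₀, hα₀Λ, hα₀Φ, hα₀c⟩ := hexΦ mu h3 h4
    have hclα₀ : c lam α₀ = 0 :=
      hΨc α₀ hα₀Λ (fun h => hα₀Φ (Finset.mem_of_mem_erase h))
    rcases eq_or_ne (lam + mu) 0 with h0 | h0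
    · exfalso
      have h' := hadd0 lam mu h1 (hSplus_sub h3) h0 αj hαjΛ
      have h'' : c lam αj + c mu αj = 0 := by exact_mod_cast h'
      omega
    have hν : lam + mu ∈ Sigma := by
      by_contra h
      exact hb (hbot _ h0 h)
    have hj : c (lam + mu) αj = c lam αj + c mu αj := by
      exact_mod_cast hcadd lam mu h1 (hSplus_sub h3) hν αj hαjΛ
    have hα : c (lam + mu) α₀ = c lam α₀ + c mu α₀ := by
      exact_mod_cast hcadd lam mu h1 (hSplus_sub h3) hν α₀ hα₀Λ
    obtain ⟨hνS, hνe⟩ := hmemN _ hν (by omega)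
    have hνΦ : lam + mu ∉ sF := by
      intro hmem
      have := hspanΦ0 (lam + mu) hν hmem α₀ hα₀Λ hα₀Φ
      omega
    rw [hnRdef]
    exact hle _ (lam + mu) ⟨hνS, hνΦ, hνe⟩
  -- A : 𝔞_Φ normalizes
  have hA : aPhi Φ ≤ normalizerIn lLam (orthCompl θ nLam v) := by
    intro X hX
    obtain ⟨hXa, hXΦ⟩ := (haPhi Φ X).mp hX
    have hX0 : X ∈ gsp 0 := by
      refine (hgsp 0 X).mpr fun H => ?_
      rw [ha_ab _ H.2 X hXa]
      simp
    refine mem_normalizerIn.mpr ⟨by rw [hlLam]; exact Submodule.mem_sup_left hX0, ?_⟩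
    intro w hw
    obtain ⟨hw1, hw2⟩ := mem_orthCompl.mp hw
    refine mem_orthCompl.mpr ⟨?_, ?_⟩
    · rw [hnLam] at hw1 ⊢
      refine hsup_mem _ _ X ?_ w hw1
      rintro mu hmu z hz
      have he : ⁅X, z⁆ = mu ⟨X, hXa⟩ • z := (hgsp mu z).mp hz ⟨X, hXa⟩
      rw [he]
      exact hle _ mu hmu (Submodule.smul_mem _ _ hz)
    · intro w' hw'
      have h0 : ⁅X, θ w'⁆ = 0 := hHv_lie ⟨X, hXa⟩ hXΦ w' hw'
      rw [hinv, h0]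
      simp
  -- C : 𝔫_Φ is contained in the sum
  have hC : nPhi ≤ normalizerIn lLam (orthCompl θ nLam v) ⊔ orthCompl θ nLam v := by
    rw [hnPhi]
    refine hsup _ _ ?_
    rintro lam ⟨hlS, hlΦ⟩
    by_cases hcase : lam ∈ sL
    · refine le_trans ?_ le_sup_left
      intro X hX
      refine mem_normalizerIn.mpr ⟨?_, ?_⟩
      · rw [hlLam]
        exact Submodule.mem_sup_right (hle _ lam (by exact ⟨hSplus_sub hlS, hcase⟩) hX)
      · intro w hw
        obtain ⟨hw1, hw2⟩ := mem_orthCompl.mp hw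
        refine mem_orthCompl.mpr ⟨?_, ?_⟩
        · rw [hnLam] at hw1 ⊢
          refine hsup_mem _ _ X ?_ w hw1
          rintro mu ⟨hm1, hm2⟩ z hz
          exact hbr_nLam lam mu (hSplus_sub hlS) (hc0e lam (hSplus_sub hlS) hcase)
            hm1 hm2 (hbr lam mu X z hX hz)
        · intro w' hw'
          have h0 : ⁅X, θ w'⁆ = 0 := hXv_lie lam hlS hlΦ hcase X hX w' hw'
          rw [hinv, h0]
          simp
    · refine le_trans ?_ le_sup_right
      intro X hX
      exact mem_orthCompl.mpr ⟨by rw [hnLam]; exact hle _ lam (by exact ⟨hlS, hcase⟩) hX,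
        hXv_orth lam hlS hlΦ X hX⟩
  -- D : the normalizer part
  have hll : lPsiPhi ≤ lLam := by
    rw [hlPsiPhi, hlLam]
    refine sup_le (le_sup_of_le_left inf_le_right) (le_sup_of_le_right (hsup _ _ ?_))
    rintro mu ⟨h1, h2⟩
    exact hle _ mu ⟨h1, hsΨΛe h2⟩
  have hstab : lPsiPhi ≤ normalizerIn ⊤ nR := by
    rw [hlPsiPhi]
    refine sup_le (inf_le_right.trans ?_) (hsup _ _ ?_)
    · intro Y hY
      refine mem_normalizerIn.mpr ⟨Submodule.mem_top, ?_⟩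
      intro z hz
      have hz' : z ∈ (⨆ lam ∈ {μ : Module.Dual ℝ a | μ ∈ Splus ∧ μ ∉ sF ∧ μ ∉ sL},
          gsp lam) := by rw [← hnRdef]; exact hz
      refine hsup_mem _ nR Y ?_ z hz'
      rintro mu ⟨h1, h2, h3⟩ z' hz''
      have hb := hbr 0 mu Y z' hY hz''
      rw [zero_add] at hb
      rw [hnRdef]
      exact hle _ mu (by exact ⟨h1, h2, h3⟩) hb
    · rintro lam ⟨h1, h2⟩
      intro Y hY
      refine mem_normalizerIn.mpr ⟨Submodule.mem_top, ?_⟩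
      intro z hz
      have hz' : z ∈ (⨆ lam ∈ {μ : Module.Dual ℝ a | μ ∈ Splus ∧ μ ∉ sF ∧ μ ∉ sL},
          gsp lam) := by rw [← hnRdef]; exact hz
      refine hsup_mem _ nR Y ?_ z hz'
      rintro mu ⟨hm1, hm2, hm3⟩ z' hz''
      exact hbr_nR lam mu h1 h2 hm1 hm2 hm3 (hbr lam mu Y z' hY hz'')
  have hD : normalizerIn lPsiPhi (orthCompl θ nPsiPhi v) ≤
      normalizerIn lLam (orthCompl θ nLam v) := by
    intro X hX
    obtain ⟨hXl, hXn⟩ := mem_normalizerIn.mp hX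
    refine mem_normalizerIn.mpr ⟨hll hXl, ?_⟩
    intro w hw
    obtain ⟨hw1, hw2⟩ := mem_orthCompl.mp hw
    obtain ⟨y, hy, z, hz, hyz⟩ := Submodule.mem_sup.mp (hnLam_split hw1)
    have hzW' : z ∈ orthCompl θ nLam v := hnR_W' hz
    have hyW : y ∈ orthCompl θ nPsiPhi v := by
      refine mem_orthCompl.mpr ⟨hy, ?_⟩
      intro w' hw'
      have h2z := (mem_orthCompl.mp hzW').2 w' hw'
      have hyval : y = w - z := by rw [← hyz]; abel
      rw [hyval, map_sub, LinearMap.sub_apply, hw2 w' hw', h2z, sub_zero]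
    have hbracket : ⁅X, w⁆ = ⁅X, y⁆ + ⁅X, z⁆ := by rw [← hyz, lie_add]
    rw [hbracket]
    exact Submodule.add_mem _ (hWW' (hXn y hyW))
      (hnR_W' ((mem_normalizerIn.mp (hstab hXl)).2 z hz))
  -- conclusion
  exact sup_le (sup_le (sup_le (hD.trans le_sup_left) (hWW'.trans le_sup_right))
    (hA.trans le_sup_left)) hC
end

section
/- Let 𝔤 be a finite-dimensional real semisimple Lie algebra and let 𝔤 = 𝔤₁ ⊕ ⋯ ⊕ 𝔤_s be its decomposition into simple ideals. Every maximal proper Lie subalgebra 𝔩 of 𝔤 (i.e. a coatom in the lattice of Lie subalgebras of 𝔤) has one of the following two forms: (i) 𝔩 = (⊕_{i≠j} 𝔤_i) ⊕ 𝔩_j for some index j and some maximal proper Lie subalgebra 𝔩_j of 𝔤_j; or (ii) 𝔩 = (⊕_{i≠j,k} 𝔤_i) ⊕ 𝔤_{j,k,σ} for two distinct indices j, k and a Lie algebra isomorphism σ : 𝔤_j → 𝔤_k, where 𝔤_{j,k,σ} = {X + σ(X) : X ∈ 𝔤_j}. (This dichotomy, stated in Section 3 of the paper following Dynkin, underlies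 the case analysis in the proofs of Theorems 1 and 3.) -/
set_option linter.unusedSectionVars false

section Aux
variable {g : Type} [LieRing g] [LieAlgebra ℝ g]
  {ι : Type} [Fintype ι] [DecidableEq ι]

variable (I : ι → LieIdeal ℝ g)
  (hI : DirectSum.IsInternal fun i => (I i : Submodule ℝ g))

noncomputable def dynkinEquiv : (DirectSum ι fun i => ↥(I i : Submodule ℝ g)) ≃ₗ[ℝ] g :=
  LinearEquiv.ofBijective (DirectSum.coeLinearMap fun i => (I i : Submodule ℝ g)) hI

noncomputable def dynkinProj (i : ι) : g →ₗ[ℝ] g :=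
  ((I i : Submodule ℝ g).subtype ∘ₗ (DirectSum.component ℝ ι _ i).comp
    (dynkinEquiv I hI).symm.toLinearMap)

lemma dynkinProj_mem (i : ι) (x : g) : dynkinProj I hI i x ∈ I i :=
  ((dynkinEquiv I hI).symm x i).2

lemma coeLinearMap_eq_sum (d : DirectSum ι fun i => ↥(I i : Submodule ℝ g)) :
    (DirectSum.coeLinearMap fun i => (I i : Submodule ℝ g)) d = ∑ i, (d i : g) := by
  have h := DirectSum.sum_univ_of d
  conv_lhs => rw [← h]
  rw [map_sum]
  refine Finset.sum_congr rfl fun i _ => ?_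
  exact DirectSum.coeLinearMap_of _ _ _

lemma sum_dynkinProj (x : g) : ∑ i, dynkinProj I hI i x = x := by
  have h : (DirectSum.coeLinearMap fun i => (I i : Submodule ℝ g))
      ((dynkinEquiv I hI).symm x) = x := (dynkinEquiv I hI).apply_symm_apply x
  rw [coeLinearMap_eq_sum] at h
  exact h

lemma dynkinEquiv_symm_of {i : ι} {x : g} (hx : x ∈ I i) :
    (dynkinEquiv I hI).symm x = DirectSum.of _ i ⟨x, hx⟩ := by
  rw [LinearEquiv.symm_apply_eq]
  have h : (dynkinEquiv I hI) (DirectSum.of _ i ⟨x, hx⟩)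
      = (DirectSum.coeLinearMap fun i => (I i : Submodule ℝ g))
        (DirectSum.of _ i ⟨x, hx⟩) := rfl
  rw [h, DirectSum.coeLinearMap_of]

lemma dynkinProj_eq_self {i : ι} {x : g} (hx : x ∈ I i) : dynkinProj I hI i x = x := by
  simp only [dynkinProj, LinearMap.coe_comp, Function.comp_apply, LinearEquiv.coe_coe]
  rw [dynkinEquiv_symm_of I hI hx, ← DirectSum.lof_eq_of ℝ, DirectSum.component.lof_self]
  rfl

lemma dynkinProj_eq_zero {i j : ι} (h : i ≠ j) {x : g} (hx : x ∈ I i) :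
    dynkinProj I hI j x = 0 := by
  simp only [dynkinProj, LinearMap.coe_comp, Function.comp_apply, LinearEquiv.coe_coe]
  rw [dynkinEquiv_symm_of I hI hx, ← DirectSum.lof_eq_of ℝ, DirectSum.component.of]
  rw [dif_neg h, map_zero]

lemma dynkin_lie_sum (x : g) {s : Finset ι} (y : ι → g) :
    ⁅x, ∑ i ∈ s, y i⁆ = ∑ i ∈ s, ⁅x, y i⁆ :=
  map_sum (LieAlgebra.ad ℝ g x) y s

lemma dynkin_sum_lie (y : g) {s : Finset ι} (x : ι → g) :
    ⁅∑ i ∈ s, x i, y⁆ = ∑ i ∈ s, ⁅x i, y⁆ := by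
  rw [← lie_skew, dynkin_lie_sum y x, ← Finset.sum_neg_distrib]
  exact Finset.sum_congr rfl fun i _ => lie_skew (x i) y

include hI in
lemma dynkin_brak_zero {i j : ι} (h : i ≠ j) {x y : g} (hx : x ∈ I i) (hy : y ∈ I j) :
    ⁅x, y⁆ = 0 := by
  have h1 : ⁅x, y⁆ ∈ (I j : Submodule ℝ g) := (I j).lie_mem hy
  have h2 : ⁅x, y⁆ ∈ (I i : Submodule ℝ g) := by
    rw [← lie_skew]
    exact neg_mem ((I i).lie_mem hx)
  have hd : Disjoint (I i : Submodule ℝ g) (I j : Submodule ℝ g) :=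
    (DirectSum.IsInternal.submodule_iSupIndep hI).pairwiseDisjoint h
  simpa using hd.le_bot ⟨h2, h1⟩

lemma dynkin_brak_eq_sum (x y : g) :
    ⁅x, y⁆ = ∑ i, ⁅dynkinProj I hI i x, dynkinProj I hI i y⁆ := by
  conv_lhs => rw [← sum_dynkinProj I hI x, ← sum_dynkinProj I hI y]
  rw [dynkin_sum_lie]
  refine Finset.sum_congr rfl fun i _ => ?_
  rw [dynkin_lie_sum]
  rw [Finset.sum_eq_single i]
  · intro j _ hji
    exact dynkin_brak_zero I hI (Ne.symm hji) (dynkinProj_mem I hI i x) (dynkinProj_mem I hI j y)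
  · intro h; exact absurd (Finset.mem_univ i) h

lemma dynkinProj_lie (j : ι) (x y : g) :
    dynkinProj I hI j ⁅x, y⁆ = ⁅dynkinProj I hI j x, dynkinProj I hI j y⁆ := by
  conv_lhs => rw [dynkin_brak_eq_sum I hI x y]
  rw [map_sum, Finset.sum_eq_single j]
  · exact dynkinProj_eq_self I hI ((I j).lie_mem (dynkinProj_mem I hI j y))
  · intro i _ hij
    exact dynkinProj_eq_zero I hI hij ((I i).lie_mem (dynkinProj_mem I hI i y))
  · intro h; exact absurd (Finset.mem_univ j) h

lemma dynkin_mem_biSup_iff (S : Set ι) (x : g) :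
    x ∈ (⨆ i ∈ S, (I i : Submodule ℝ g)) ↔ ∀ i ∉ S, dynkinProj I hI i x = 0 := by
  constructor
  · intro hx i hiS
    have hle : (⨆ m ∈ S, (I m : Submodule ℝ g)) ≤ LinearMap.ker (dynkinProj I hI i) := by
      refine iSup₂_le fun m hm => fun y hy => ?_
      have hmi : m ≠ i := fun h => hiS (h ▸ hm)
      exact dynkinProj_eq_zero I hI hmi hy
    exact hle hx
  · intro h
    rw [← sum_dynkinProj I hI x]
    refine Submodule.sum_mem _ fun i _ => ?_
    by_cases hi : i ∈ S
    · exact le_iSup₂ (f := fun i (_ : i ∈ S) => (I i : Submodule ℝ g)) i hi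
        (dynkinProj_mem I hI i x)
    · rw [h i hi]; exact zero_mem _

lemma dynkin_central_eq_zero [LieAlgebra.IsSemisimple ℝ g] {c : g}
    (hc : ∀ x : g, ⁅x, c⁆ = 0) : c = 0 := by
  have h : c ∈ LieAlgebra.center ℝ g := (LieModule.mem_maxTrivSubmodule ℝ g g c).2 hc
  rw [LieAlgebra.center_eq_bot] at h
  simpa using h

end Aux

section Aux2
variable {g : Type} [LieRing g] [LieAlgebra ℝ g]
  {ι : Type} [Fintype ι] [DecidableEq ι]

lemma dynkin_comap_eq (I : ι → LieIdeal ℝ g)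
    (hI : DirectSum.IsInternal fun i => (I i : Submodule ℝ g))
    (j : ι) (m : Submodule ℝ g) (hm : m ≤ (I j : Submodule ℝ g)) :
    Submodule.comap (dynkinProj I hI j) m
      = (⨆ i ∈ {i : ι | i ≠ j}, (I i : Submodule ℝ g)) ⊔ m := by
  apply le_antisymm
  · intro x hx
    have hx' : dynkinProj I hI j x ∈ m := hx
    have h1 : x - dynkinProj I hI j x ∈ (⨆ i ∈ {i : ι | i ≠ j}, (I i : Submodule ℝ g)) := by
      rw [dynkin_mem_biSup_iff I hI]
      intro i hi
      have hij : i = j := by simpa using hi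
      subst hij
      rw [map_sub, dynkinProj_eq_self I hI (dynkinProj_mem I hI i x), sub_self]
    have : x = (x - dynkinProj I hI j x) + dynkinProj I hI j x := by abel
    rw [this]
    exact Submodule.add_mem_sup h1 hx'
  · apply sup_le
    · refine iSup₂_le fun i hi => fun x hx => ?_
      have h0 : dynkinProj I hI j x = 0 := dynkinProj_eq_zero I hI hi hx
      show dynkinProj I hI j x ∈ m
      rw [h0]; exact zero_mem m
    · intro x hx
      show dynkinProj I hI j x ∈ m
      rw [dynkinProj_eq_self I hI (hm hx)]
      exact hx

/-- comap of a bracket-closed submodule of `I j` is a Lie subalgebra. -/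
noncomputable def dynkinComapSubalg (I : ι → LieIdeal ℝ g)
    (hI : DirectSum.IsInternal fun i => (I i : Submodule ℝ g))
    (j : ι) (m : Submodule ℝ g)
    (hbrak : ∀ x ∈ m, ∀ y ∈ m, ⁅x, y⁆ ∈ m) : LieSubalgebra ℝ g where
  toSubmodule := Submodule.comap (dynkinProj I hI j) m
  lie_mem' := by
    intro x y hx hy
    show dynkinProj I hI j ⁅x, y⁆ ∈ m
    rw [dynkinProj_lie]
    exact hbrak _ hx _ hy

end Aux2

theorem dynkin_case1
    {g : Type} [LieRing g] [LieAlgebra ℝ g] [FiniteDimensional ℝ g]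
    [LieAlgebra.IsSemisimple ℝ g]
    {ι : Type} [Fintype ι] [DecidableEq ι]
    (I : ι → LieIdeal ℝ g)
    (hI_atom : ∀ i, IsAtom (I i))
    (hI_internal : DirectSum.IsInternal fun i => (I i : Submodule ℝ g))
    (l : LieSubalgebra ℝ g)
    (hl : IsCoatom l)
    (j : ι) (hj : Submodule.map (dynkinProj I hI_internal j) l.toSubmodule ≠ (I j : Submodule ℝ g)) :
    (∃ j : ι, ∃ lj : LieSubalgebra ℝ g,
      (lj : Set g) ⊆ (I j : Set g)
      ∧ lj.toSubmodule ≠ (I j : Submodule ℝ g)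
      ∧ (∀ m : LieSubalgebra ℝ g, (m : Set g) ⊆ (I j : Set g) → lj ≤ m →
          m = lj ∨ m.toSubmodule = (I j : Submodule ℝ g))
      ∧ l.toSubmodule
          = (⨆ i ∈ {i : ι | i ≠ j}, (I i : Submodule ℝ g)) ⊔ lj.toSubmodule) := by
  classical
  set π := dynkinProj I hI_internal with hπdef
  set pj := Submodule.map (π j) l.toSubmodule with hpjdef
  have hpj_le : pj ≤ (I j : Submodule ℝ g) := by
    rintro _ ⟨x, hx, rfl⟩
    exact dynkinProj_mem I hI_internal j x
  have hpj_brak : ∀ x ∈ pj, ∀ y ∈ pj, ⁅x, y⁆ ∈ pj := by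
    rintro _ ⟨x, hx, rfl⟩ _ ⟨y, hy, rfl⟩
    rw [← dynkinProj_lie I hI_internal j x y]
    exact ⟨⁅x, y⁆, l.lie_mem' hx hy, rfl⟩
  -- the subalgebra L := comap (π j) pj
  set L := dynkinComapSubalg I hI_internal j pj hpj_brak with hLdef
  have hL : (L : Submodule ℝ g) = Submodule.comap (π j) pj := rfl
  have hlL : l ≤ L := by
    intro x hx
    show dynkinProj I hI_internal j x ∈ pj
    exact Submodule.mem_map_of_mem hx
  have hLne : L ≠ ⊤ := by
    intro htop
    apply hj
    apply le_antisymm hpj_le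
    intro x hx
    have hxL : x ∈ L := htop ▸ LieSubalgebra.mem_top x
    have : π j x ∈ pj := hxL
    rwa [dynkinProj_eq_self I hI_internal hx] at this
  have hlL' : l = L := by
    rcases lt_or_eq_of_le hlL with h | h
    · exact absurd (hl.2 L h) hLne
    · exact h
  refine ⟨j, ⟨pj, fun {x y} hx hy => hpj_brak x hx y hy⟩, ?_, hj, ?_, ?_⟩
  · intro x hx
    exact hpj_le hx
  · -- maximality
    intro m hm hljm
    have hm' : (m : Submodule ℝ g) ≤ (I j : Submodule ℝ g) := fun x hx => hm hx
    set M := dynkinComapSubalg I hI_internal j (m : Submodule ℝ g)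
      (fun x hx y hy => m.lie_mem' hx hy) with hMdef
    have hlM : l ≤ M := by
      intro x hx
      show π j x ∈ (m : Submodule ℝ g)
      exact hljm (Submodule.mem_map_of_mem hx)
    rcases lt_or_eq_of_le hlM with h | h
    · right
      have htop := hl.2 M h
      apply le_antisymm hm'
      intro x hx
      have hxM : x ∈ M := htop ▸ LieSubalgebra.mem_top x
      have : π j x ∈ (m : Submodule ℝ g) := hxM
      rwa [dynkinProj_eq_self I hI_internal hx] at this
    · left
      apply le_antisymm _ hljm
      intro x hx
      have hxl : x ∈ l := by
        rw [h]
        show π j x ∈ (m : Submodule ℝ g)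
        rw [dynkinProj_eq_self I hI_internal (hm hx)]
        exact hx
      show x ∈ pj
      have : π j x ∈ pj := Submodule.mem_map_of_mem hxl
      rwa [dynkinProj_eq_self I hI_internal (hm hx)] at this
  · have e1 : l.toSubmodule = (L : Submodule ℝ g) := by rw [hlL']
    rw [e1, hL, dynkin_comap_eq I hI_internal j pj hpj_le]

section Aux3
variable {g : Type} [LieRing g] [LieAlgebra ℝ g]
  {ι : Type} [Fintype ι] [DecidableEq ι]

/-- For `y ∈ I i`, `⁅x, y⁆ = ⁅π i x, y⁆`. -/
lemma dynkin_brak_eq_proj (I : ι → LieIdeal ℝ g)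
    (hI : DirectSum.IsInternal fun i => (I i : Submodule ℝ g))
    (i : ι) (x : g) {y : g} (hy : y ∈ I i) :
    ⁅x, y⁆ = ⁅dynkinProj I hI i x, y⁆ := by
  conv_lhs => rw [← sum_dynkinProj I hI x, dynkin_sum_lie]
  rw [Finset.sum_eq_single i]
  · intro m _ hmi
    exact dynkin_brak_zero I hI hmi (dynkinProj_mem I hI m x) hy
  · intro h; exact absurd (Finset.mem_univ i) h

lemma dynkin_brak_eq_proj' (I : ι → LieIdeal ℝ g)
    (hI : DirectSum.IsInternal fun i => (I i : Submodule ℝ g))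
    (i : ι) {x : g} (hx : x ∈ I i) (y : g) :
    ⁅x, y⁆ = ⁅x, dynkinProj I hI i y⁆ := by
  rw [← lie_skew, dynkin_brak_eq_proj I hI i y hx, ← lie_skew (dynkinProj I hI i y) x]
  rw [neg_neg]

end Aux3

theorem dynkin_case2
    {g : Type} [LieRing g] [LieAlgebra ℝ g] [FiniteDimensional ℝ g]
    [LieAlgebra.IsSemisimple ℝ g]
    {ι : Type} [Fintype ι] [DecidableEq ι]
    (I : ι → LieIdeal ℝ g)
    (hI_atom : ∀ i, IsAtom (I i))
    (hI_internal : DirectSum.IsInternal fun i => (I i : Submodule ℝ g))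
    (l : LieSubalgebra ℝ g)
    (hl : IsCoatom l)
    (hcase : ∀ j, Submodule.map (dynkinProj I hI_internal j) l.toSubmodule
      = (I j : Submodule ℝ g)) :
    (∃ j k : ι, j ≠ k ∧ ∃ σ : g →ₗ[ℝ] g,
      (∀ x ∈ I j, σ x ∈ I k)
      ∧ (∀ x ∈ I j, ∀ y ∈ I j, σ ⁅x, y⁆ = ⁅σ x, σ y⁆)
      ∧ (∀ x ∈ I j, σ x = 0 → x = 0)
      ∧ (∀ y ∈ I k, ∃ x ∈ I j, σ x = y)
      ∧ l.toSubmodule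
          = (⨆ i ∈ {i : ι | i ≠ j ∧ i ≠ k}, (I i : Submodule ℝ g))
            ⊔ Submodule.map (LinearMap.id + σ) (I j : Submodule ℝ g)) := by
  classical
  set π := dynkinProj I hI_internal with hπdef
  have hIne : ∀ i, (I i : Submodule ℝ g) ≠ ⊥ := by
    intro i h
    exact (hI_atom i).1 (by
      have := LieIdeal.toLieSubalgebra_toSubmodule ℝ g (I i)
      rw [h] at this
      exact (LieSubmodule.toSubmodule_eq_bot (I i)).mp this.symm)
  have h_not_top : l.toSubmodule ≠ ⊤ := by
    intro h
    apply hl.1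
    rw [← LieSubalgebra.toSubmodule_inj, h]
    rfl
  -- surjectivity onto each factor, elementwise
  have hsurj : ∀ i (x : g), ∃ z ∈ l.toSubmodule, π i z = π i x := by
    intro i x
    have : π i x ∈ (I i : Submodule ℝ g) := dynkinProj_mem I hI_internal i x
    rw [← hcase i] at this
    obtain ⟨z, hz, hzx⟩ := this
    exact ⟨z, hz, hzx⟩
  -- l ⊓ I i is bracket-stable under everything
  have hNideal : ∀ i (x : g), ∀ y ∈ l.toSubmodule ⊓ (I i : Submodule ℝ g),
      ⁅x, y⁆ ∈ l.toSubmodule ⊓ (I i : Submodule ℝ g) := by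
    intro i x y hy
    obtain ⟨hyl, hyI⟩ := hy
    obtain ⟨z, hz, hzx⟩ := hsurj i x
    have h1 : ⁅x, y⁆ = ⁅π i z, y⁆ := by
      rw [dynkin_brak_eq_proj I hI_internal i x hyI, hzx]
    have h2 : ⁅z, y⁆ = ⁅π i z, y⁆ := dynkin_brak_eq_proj I hI_internal i z hyI
    constructor
    · rw [h1, ← h2]
      exact l.lie_mem' hz hyl
    · exact (I i).lie_mem hyI
  -- if I i is not inside l then l ⊓ I i = ⊥
  have hN : ∀ i, ¬ ((I i : Submodule ℝ g) ≤ l.toSubmodule) →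
      l.toSubmodule ⊓ (I i : Submodule ℝ g) = ⊥ := by
    intro i hi
    set Ni : LieIdeal ℝ g :=
      { toSubmodule := l.toSubmodule ⊓ (I i : Submodule ℝ g)
        lie_mem := fun {x m} hm => hNideal i x m hm } with hNidef
    have hNle : Ni ≤ I i := fun x hx => hx.2
    rcases (hI_atom i).le_iff.mp hNle with h | h
    · have : (Ni : Submodule ℝ g) = ⊥ := by rw [h]; rfl
      exact this
    · exfalso
      apply hi
      intro x hx
      have : x ∈ Ni := by rw [h]; exact hx
      exact this.1
  -- existence of j with I j not inside l
  have hKex : ∃ j, ¬ ((I j : Submodule ℝ g) ≤ l.toSubmodule) := by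
    by_contra h
    push_neg at h
    apply h_not_top
    rw [← top_le_iff, ← hI_internal.submodule_iSup_eq_top]
    exact iSup_le h
  obtain ⟨j, hj⟩ := hKex
  -- l ⊔ I i = ⊤ when I i not inside l
  have hsup_top : ∀ i, ¬ ((I i : Submodule ℝ g) ≤ l.toSubmodule) →
      l.toSubmodule ⊔ (I i : Submodule ℝ g) = ⊤ := by
    intro i hi
    set Li : LieSubalgebra ℝ g :=
      { toSubmodule := l.toSubmodule ⊔ (I i : Submodule ℝ g)
        lie_mem' := by
          intro x y hx hy
          obtain ⟨a, ha, b, hb, rfl⟩ := Submodule.mem_sup.mp hx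
          obtain ⟨a', ha', b', hb', rfl⟩ := Submodule.mem_sup.mp hy
          have e : ⁅a + b, a' + b'⁆
              = ⁅a, a'⁆ + (⁅a, b'⁆ + (⁅b, a'⁆ + ⁅b, b'⁆)) := by
            rw [add_lie, lie_add, lie_add]
            abel
          rw [e]
          refine Submodule.add_mem_sup (l.lie_mem' ha ha') ?_
          refine Submodule.add_mem _ ((I i).lie_mem hb') (Submodule.add_mem _ ?_ ((I i).lie_mem hb'))
          rw [← lie_skew]
          exact neg_mem ((I i).lie_mem hb) } with hLidef
    have hlLi : l ≤ Li := fun x hx => Submodule.mem_sup_left hx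
    have hne : l ≠ Li := by
      intro h
      apply hi
      intro x hx
      have : x ∈ Li := Submodule.mem_sup_right hx
      rw [← h] at this
      exact this
    have := hl.2 Li (lt_of_le_of_ne hlLi hne)
    rw [← LieSubalgebra.toSubmodule_inj] at this
    exact this
  -- ker π i as a biSup
  have hker_eq : ∀ i : ι, (LinearMap.ker (π i) : Submodule ℝ g)
      = ⨆ m ∈ {m : ι | m ≠ i}, (I m : Submodule ℝ g) := by
    intro i
    have h := dynkin_comap_eq I hI_internal i ⊥ bot_le
    rw [sup_bot_eq] at h
    exact h
  -- existence of a second index k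
  have hk_ex : ∃ k, k ≠ j ∧ ¬ ((I k : Submodule ℝ g) ≤ l.toSubmodule) := by
    by_contra h
    push_neg at h
    -- then ker π j ≤ l
    have hker_le : (LinearMap.ker (π j) : Submodule ℝ g) ≤ l.toSubmodule := by
      rw [hker_eq j]
      refine iSup₂_le fun m hm => ?_
      by_contra hmle
      exact hmle (h m hm)
    -- l = ker π j by the modular law
    have hmod : l.toSubmodule = LinearMap.ker (π j) := by
      have htop : (LinearMap.ker (π j) : Submodule ℝ g) ⊔ (I j : Submodule ℝ g) = ⊤ := by
        have h1 := dynkin_comap_eq I hI_internal j (I j : Submodule ℝ g) le_rfl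
        have h2 : Submodule.comap (π j) (I j : Submodule ℝ g) = ⊤ := by
          rw [eq_top_iff]
          exact fun x _ => dynkinProj_mem I hI_internal j x
        rw [h2, ← hker_eq j] at h1
        exact h1.symm
      have := sup_inf_assoc_of_le (z := l.toSubmodule) (I j : Submodule ℝ g) hker_le
      rw [inf_comm (LinearMap.ker (π j) ⊔ (I j : Submodule ℝ g)) l.toSubmodule] at this
      rw [htop, inf_top_eq] at this
      rw [this, inf_comm, hN j hj, sup_bot_eq]
    -- contradiction with surjectivity of π j on l
    apply hIne j
    rw [← hcase j, hmod]
    rw [eq_bot_iff]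
    rintro _ ⟨x, hx, rfl⟩
    simpa using hx
  obtain ⟨k, hkj, hk⟩ := hk_ex
  -- D-stability: l ⊓ ker π i is stable under all brackets
  have hD_stable : ∀ i, ¬ ((I i : Submodule ℝ g) ≤ l.toSubmodule) →
      ∀ (x : g), ∀ w ∈ l.toSubmodule ⊓ LinearMap.ker (π i),
        ⁅x, w⁆ ∈ l.toSubmodule ⊓ LinearMap.ker (π i) := by
    intro i hi x w hw
    obtain ⟨hwl, hwk⟩ := hw
    have hwk' : π i w = 0 := hwk
    have hx : x ∈ l.toSubmodule ⊔ (I i : Submodule ℝ g) := by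
      rw [hsup_top i hi]; exact Submodule.mem_top
    obtain ⟨a, ha, b, hb, rfl⟩ := Submodule.mem_sup.mp hx
    have hbw : ⁅b, w⁆ = 0 := by
      rw [dynkin_brak_eq_proj' I hI_internal i hb w, hwk', lie_zero]
    rw [add_lie, hbw, add_zero]
    refine ⟨l.lie_mem' ha hwl, ?_⟩
    show π i ⁅a, w⁆ = 0
    rw [dynkinProj_lie I hI_internal i a w, hwk', lie_zero]
  -- elements of l ⊓ ker π i have zero component in any other non-contained factor
  have hD_proj : ∀ i i', i' ≠ i → ¬ ((I i : Submodule ℝ g) ≤ l.toSubmodule) →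
      ¬ ((I i' : Submodule ℝ g) ≤ l.toSubmodule) →
      ∀ w ∈ l.toSubmodule ⊓ LinearMap.ker (π i), π i' w = 0 := by
    intro i i' hii' hi hi' w hw
    apply dynkin_central_eq_zero
    intro x
    have h1 : ⁅x, π i' w⁆ = ⁅π i' x, π i' w⁆ :=
      dynkin_brak_eq_proj I hI_internal i' x (dynkinProj_mem I hI_internal i' w)
    have h2 : ⁅π i' x, w⁆ = ⁅π i' x, π i' w⁆ :=
      dynkin_brak_eq_proj' I hI_internal i' (dynkinProj_mem I hI_internal i' x) w
    have h3 : ⁅π i' x, w⁆ ∈ l.toSubmodule ⊓ (I i' : Submodule ℝ g) := by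
      refine ⟨(hD_stable i hi (π i' x) w hw).1, ?_⟩
      rw [← lie_skew]
      exact neg_mem ((I i').lie_mem (dynkinProj_mem I hI_internal i' x))
    rw [hN i' hi'] at h3
    rw [h1, ← h2, (Submodule.mem_bot ℝ).mp h3]
  -- construction of σ
  set f : ↥l.toSubmodule →ₗ[ℝ] g := (π j) ∘ₗ l.toSubmodule.subtype with hfdef
  have hrange : LinearMap.range f = (I j : Submodule ℝ g) := by
    rw [hfdef, LinearMap.range_comp, Submodule.range_subtype]
    exact hcase j
  have hkerf : ∀ z ∈ LinearMap.ker f, ((π k) ∘ₗ l.toSubmodule.subtype) z = 0 := by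
    intro z hz
    have hz' : π j (z : g) = 0 := hz
    exact hD_proj j k hkj hj hk (z : g) ⟨z.2, hz'⟩
  set q := Submodule.liftQ (LinearMap.ker f) ((π k) ∘ₗ l.toSubmodule.subtype) hkerf with hqdef
  have hmemrange : ∀ x : g, π j x ∈ LinearMap.range f := by
    intro x; rw [hrange]; exact dynkinProj_mem I hI_internal j x
  set σ : g →ₗ[ℝ] g :=
    q ∘ₗ ((f.quotKerEquivRange.symm : LinearMap.range f ≃ₗ[ℝ] _) :
        LinearMap.range f →ₗ[ℝ] _)
      ∘ₗ (LinearMap.codRestrict (LinearMap.range f) (π j) hmemrange) with hσdef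
  have hσ : ∀ (x z : g) (hz : z ∈ l.toSubmodule), π j z = π j x → σ x = π k z := by
    intro x z hz hzx
    have h1 : (⟨π j x, hmemrange x⟩ : LinearMap.range f)
        = f.quotKerEquivRange (Submodule.Quotient.mk ⟨z, hz⟩) := by
      apply Subtype.ext
      rw [LinearMap.quotKerEquivRange_apply_mk]
      exact hzx.symm
    have h2 : (f.quotKerEquivRange).symm ⟨π j x, hmemrange x⟩
        = Submodule.Quotient.mk ⟨z, hz⟩ := by
      rw [h1, LinearEquiv.symm_apply_apply]
    show q ((f.quotKerEquivRange).symm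
      (LinearMap.codRestrict (LinearMap.range f) (π j) hmemrange x)) = π k z
    have h3 : LinearMap.codRestrict (LinearMap.range f) (π j) hmemrange x
        = ⟨π j x, hmemrange x⟩ := rfl
    rw [h3, h2, hqdef]
    rfl
  -- basic properties of σ
  have hσmem : ∀ x : g, σ x ∈ I k := by
    intro x
    obtain ⟨z, hz, hzx⟩ := hsurj j x
    rw [hσ x z hz hzx]
    exact dynkinProj_mem I hI_internal k z
  have hπσ : ∀ x ∈ l.toSubmodule, σ (π j x) = π k x := by
    intro x hx
    exact hσ (π j x) x hx
      (dynkinProj_eq_self I hI_internal (dynkinProj_mem I hI_internal j x)).symm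
  have hσmul : ∀ x ∈ I j, ∀ y ∈ I j, σ ⁅x, y⁆ = ⁅σ x, σ y⁆ := by
    intro x hx y hy
    obtain ⟨z, hz, hzx⟩ := hsurj j x
    obtain ⟨w, hw, hwy⟩ := hsurj j y
    have hx' : π j x = x := dynkinProj_eq_self I hI_internal hx
    have hy' : π j y = y := dynkinProj_eq_self I hI_internal hy
    have hbr : π j ⁅z, w⁆ = π j ⁅x, y⁆ := by
      rw [dynkinProj_lie I hI_internal j z w, dynkinProj_lie I hI_internal j x y,
        hzx, hwy, hx', hy']
    rw [hσ ⁅x, y⁆ ⁅z, w⁆ (l.lie_mem' hz hw) hbr, dynkinProj_lie I hI_internal k z w,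
      hσ x z hz hzx, hσ y w hw hwy]
  have hσinj : ∀ x ∈ I j, σ x = 0 → x = 0 := by
    intro x hx h0
    obtain ⟨z, hz, hzx⟩ := hsurj j x
    have hπk : π k z = 0 := by rw [← hσ x z hz hzx]; exact h0
    have hπj : π j z = 0 := hD_proj k j (Ne.symm hkj) hk hj z ⟨hz, hπk⟩
    rw [← dynkinProj_eq_self I hI_internal hx, ← hzx, hπj]
  have hσsurj : ∀ y ∈ I k, ∃ x ∈ I j, σ x = y := by
    intro y hy
    obtain ⟨z, hz, hzy⟩ := hsurj k y
    refine ⟨π j z, dynkinProj_mem I hI_internal j z, ?_⟩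
    rw [hπσ z hz, hzy, dynkinProj_eq_self I hI_internal hy]
  -- the candidate subalgebra
  have hBapp : ∀ x : g, (LinearMap.id + σ : g →ₗ[ℝ] g) x = x + σ x := fun x => by
    rw [LinearMap.add_apply, LinearMap.id_apply]
  set A := ⨆ i ∈ {i : ι | i ≠ j ∧ i ≠ k}, (I i : Submodule ℝ g) with hAdef
  set B := Submodule.map (LinearMap.id + σ) (I j : Submodule ℝ g) with hBdef
  have hmemA : ∀ x : g, x ∈ A ↔ (π j x = 0 ∧ π k x = 0) := by
    intro x
    rw [hAdef, dynkin_mem_biSup_iff I hI_internal]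
    constructor
    · intro h
      exact ⟨h j (by simp), h k (by simp)⟩
    · rintro ⟨h1, h2⟩ i hi
      simp only [Set.mem_setOf_eq, not_and_or, not_not] at hi
      rcases hi with rfl | rfl
      exacts [h1, h2]
  have hjk : j ≠ k := Ne.symm hkj
  have hzeroAB : ∀ a : g, π j a = 0 → π k a = 0 → ∀ x ∈ (I j : Submodule ℝ g),
      ⁅a, x + σ x⁆ = 0 := by
    intro a haj hak x hx
    have h1 : ⁅a, x⁆ = 0 := by
      rw [dynkin_brak_eq_proj I hI_internal j a hx, haj, zero_lie]
    have h2 : ⁅a, σ x⁆ = 0 := by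
      rw [dynkin_brak_eq_proj I hI_internal k a (hσmem x), hak, zero_lie]
    rw [lie_add, h1, h2, add_zero]
  set RL : LieSubalgebra ℝ g :=
    { toSubmodule := A ⊔ B
      lie_mem' := by
        intro u v hu hv
        obtain ⟨a, ha, b, hb, rfl⟩ := Submodule.mem_sup.mp hu
        obtain ⟨a', ha', b', hb', rfl⟩ := Submodule.mem_sup.mp hv
        obtain ⟨x, hx, rfl⟩ := hb
        obtain ⟨y, hy, rfl⟩ := hb'
        rw [hBapp, hBapp]
        have haj := ((hmemA a).mp ha).1
        have hak := ((hmemA a).mp ha).2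
        have haj' := ((hmemA a').mp ha').1
        have hak' := ((hmemA a').mp ha').2
        have e : ⁅a + (x + σ x), a' + (y + σ y)⁆
            = ⁅a, a'⁆ + ⁅a, y + σ y⁆ + ⁅x + σ x, a'⁆ + ⁅x + σ x, y + σ y⁆ := by
          simp only [add_lie, lie_add]
          abel
        rw [e, hzeroAB a haj hak y hy]
        have e2 : ⁅x + σ x, a'⁆ = 0 := by
          rw [← lie_skew, hzeroAB a' haj' hak' x hx, neg_zero]
        rw [e2]
        have e3 : ⁅x + σ x, y + σ y⁆ = ⁅x, y⁆ + σ ⁅x, y⁆ := by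
          rw [add_lie, lie_add, lie_add]
          rw [dynkin_brak_zero I hI_internal hjk hx (hσmem y)]
          rw [dynkin_brak_zero I hI_internal (Ne.symm hjk) (hσmem x) hy]
          rw [hσmul x hx y hy]
          abel
        rw [e3, add_zero, add_zero]
        have hA2 : ⁅a, a'⁆ ∈ A := by
          rw [hmemA]
          constructor
          · rw [dynkinProj_lie I hI_internal j a a', haj, zero_lie]
          · rw [dynkinProj_lie I hI_internal k a a', hak, zero_lie]
        have hB2 : ⁅x, y⁆ + σ ⁅x, y⁆ ∈ B := by
          refine ⟨⁅x, y⁆, ?_, (hBapp _).symm⟩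
          rw [← lie_skew]
          exact neg_mem ((I j).lie_mem hx)
        exact Submodule.add_mem_sup hA2 hB2 } with hRLdef
  have hlR : l ≤ RL := by
    intro x hx
    show x ∈ A ⊔ B
    have hdec : x - π j x - π k x ∈ A := by
      rw [hmemA]
      constructor
      · rw [map_sub, map_sub,
          dynkinProj_eq_self I hI_internal (dynkinProj_mem I hI_internal j x),
          dynkinProj_eq_zero I hI_internal hkj (dynkinProj_mem I hI_internal k x)]
        abel
      · rw [map_sub, map_sub,
          dynkinProj_eq_self I hI_internal (dynkinProj_mem I hI_internal k x),
          dynkinProj_eq_zero I hI_internal hjk (dynkinProj_mem I hI_internal j x)]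
        abel
    have hB2 : π j x + σ (π j x) ∈ B :=
      ⟨π j x, dynkinProj_mem I hI_internal j x, (hBapp _).symm⟩
    have hxeq : x = (x - π j x - π k x) + (π j x + σ (π j x)) := by
      rw [hπσ x hx]
      abel
    rw [hxeq]
    exact Submodule.add_mem_sup hdec hB2
  have hRne : RL ≠ ⊤ := by
    intro htop
    obtain ⟨y, hy, hy0⟩ := Submodule.exists_mem_ne_zero_of_ne_bot (hIne k)
    have hyR : y ∈ A ⊔ B := by
      have : y ∈ RL := htop ▸ LieSubalgebra.mem_top y
      exact this
    have hchar : A ⊔ B ≤ LinearMap.ker ((π k) - σ ∘ₗ (π j)) := by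
      apply sup_le
      · intro a ha
        rw [LinearMap.mem_ker, LinearMap.sub_apply, LinearMap.coe_comp, Function.comp_apply,
          ((hmemA a).mp ha).1, ((hmemA a).mp ha).2, map_zero, sub_zero]
      · rintro _ ⟨x, hx, rfl⟩
        rw [LinearMap.mem_ker, hBapp x]
        have e1 : π k (x + σ x) = σ x := by
          rw [map_add, dynkinProj_eq_zero I hI_internal hjk hx,
            dynkinProj_eq_self I hI_internal (hσmem x), zero_add]
        have e2 : π j (x + σ x) = x := by
          rw [map_add, dynkinProj_eq_self I hI_internal hx,
            dynkinProj_eq_zero I hI_internal (Ne.symm hjk) (hσmem x), add_zero]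
        have e3 : (σ ∘ₗ π j) (x + σ x) = σ x := by
          rw [LinearMap.coe_comp, Function.comp_apply, e2]
        rw [LinearMap.sub_apply, e1, e3, sub_self]
    have h' := hchar hyR
    rw [LinearMap.mem_ker, LinearMap.sub_apply, LinearMap.coe_comp, Function.comp_apply] at h'
    rw [dynkinProj_eq_self I hI_internal hy,
      dynkinProj_eq_zero I hI_internal (Ne.symm hjk) hy, map_zero, sub_zero] at h'
    exact hy0 h' 
  have hlRL : l = RL := by
    rcases lt_or_eq_of_le hlR with h | h
    · exact absurd (hl.2 RL h) hRne
    · exact h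
  refine ⟨j, k, hjk, σ, fun x _ => hσmem x, hσmul, hσinj, hσsurj, ?_⟩
  exact congrArg LieSubalgebra.toSubmodule hlRL



/-- Dynkin's dichotomy for maximal subalgebras of a semisimple Lie
algebra. Let `𝔤` be a finite-dimensional real semisimple Lie algebra, and let
`𝔤 = 𝔤₁ ⊕ ⋯ ⊕ 𝔤_s` be its decomposition into simple ideals (formalized by a finite family
of atoms in the lattice of ideals whose underlying submodules form an internal direct
sum).  Every maximal proper Lie subalgebra `𝔩` of `𝔤` (a coatom in the lattice of Lie
subalgebras) has one of the following two forms: (i) `𝔩 = (⊕_{i≠j} 𝔤_i) ⊕ 𝔩_j` for some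
index `j` and some maximal proper Lie subalgebra `𝔩_j` of `𝔤_j`; or (ii)
`𝔩 = (⊕_{i≠j,k} 𝔤_i) ⊕ 𝔤_{j,k,σ}` for two distinct indices `j, k` and a Lie algebra
isomorphism `σ : 𝔤_j → 𝔤_k`, where `𝔤_{j,k,σ} = {X + σ(X) : X ∈ 𝔤_j}`. -/
theorem maximal_subalgebra_of_semisimple_dichotomy
    {g : Type} [LieRing g] [LieAlgebra ℝ g] [FiniteDimensional ℝ g]
    [LieAlgebra.IsSemisimple ℝ g]
    {ι : Type} [Fintype ι] [DecidableEq ι]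
    (I : ι → LieIdeal ℝ g)
    (hI_atom : ∀ i, IsAtom (I i))
    (hI_internal : DirectSum.IsInternal fun i => (I i : Submodule ℝ g))
    (l : LieSubalgebra ℝ g)
    (hl : IsCoatom l) :
    (∃ j : ι, ∃ lj : LieSubalgebra ℝ g,
      (lj : Set g) ⊆ (I j : Set g)
      ∧ lj.toSubmodule ≠ (I j : Submodule ℝ g)
      ∧ (∀ m : LieSubalgebra ℝ g, (m : Set g) ⊆ (I j : Set g) → lj ≤ m →
          m = lj ∨ m.toSubmodule = (I j : Submodule ℝ g))
      ∧ l.toSubmodule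
          = (⨆ i ∈ {i : ι | i ≠ j}, (I i : Submodule ℝ g)) ⊔ lj.toSubmodule)
    ∨ (∃ j k : ι, j ≠ k ∧ ∃ σ : g →ₗ[ℝ] g,
      (∀ x ∈ I j, σ x ∈ I k)
      ∧ (∀ x ∈ I j, ∀ y ∈ I j, σ ⁅x, y⁆ = ⁅σ x, σ y⁆)
      ∧ (∀ x ∈ I j, σ x = 0 → x = 0)
      ∧ (∀ y ∈ I k, ∃ x ∈ I j, σ x = y)
      ∧ l.toSubmodule
          = (⨆ i ∈ {i : ι | i ≠ j ∧ i ≠ k}, (I i : Submodule ℝ g))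
            ⊔ Submodule.map (LinearMap.id + σ) (I j : Submodule ℝ g)) := by
  classical
  by_cases hcase : ∀ j, Submodule.map (dynkinProj I hI_internal j) l.toSubmodule
      = (I j : Submodule ℝ g)
  · exact Or.inr (dynkin_case2 I hI_atom hI_internal l hl hcase)
  · push_neg at hcase
    obtain ⟨j, hj⟩ := hcase
    exact Or.inl (dynkin_case1 I hI_atom hI_internal l hl j hj)
end
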